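/- arXiv:2401.11383 — 4 statements merged into one kernel-verified Lean document; each statement's English description precedes it below -/
import Mathlib

section
/- Let p*_t be the adjoint Ornstein-Uhlenbeck semigroup, defined by (p*_t f)(x) = ∫ f(y) g_{1−e^{−2t}}(x − e^{−t} y) dy where g_a is the centered Gaussian density of variance a. Then for any t ≥ 0 and probability densities f₁, f₂ and λ ∈ (0,1), (p*_t f₁) *_λ (p*_t f₂) = p*_t (f₁ *_λ f₂), where f₁ *_λ f₂ denotes the density of λX₁ + √(1−λ²)X₂ for independent X₁ ∼ f₁, X₂ ∼ f₂. -/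
open MeasureTheory ProbabilityTheory Real Filter Set

/-- Centered Gaussian density with variance `a`. -/
noncomputable def gaussDensity (a : ℝ) (x : ℝ) : ℝ :=
  (Real.sqrt (2 * Real.pi * a))⁻¹ * Real.exp (-x ^ 2 / (2 * a))

/-- Fisher information of a density `f`. -/
noncomputable def fisherInfo (f : ℝ → ℝ) : ℝ :=
  ∫ x, (deriv f x) ^ 2 / f x

/-- Differential entropy of a density `f`. -/
noncomputable def diffEntropy (f : ℝ → ℝ) : ℝ :=
  -∫ x, f x * Real.log (f x)

/-- Kullback-Leibler divergence between densities. -/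
noncomputable def klDiv' (f g : ℝ → ℝ) : ℝ :=
  ∫ x, f x * Real.log (f x / g x)

/-- `f` is a probability density function on `ℝ`. -/
def IsPdf (f : ℝ → ℝ) : Prop :=
  Measurable f ∧ (∀ x, 0 ≤ f x) ∧ ∫ x, f x = 1

/-- Adjoint Ornstein-Uhlenbeck semigroup acting on densities. -/
noncomputable def OUStar (t : ℝ) (f : ℝ → ℝ) (x : ℝ) : ℝ :=
  ∫ y, f y * gaussDensity (1 - Real.exp (-2 * t)) (x - Real.exp (-t) * y)

/-- Density of `λ X₁ + √(1-λ²) X₂` for independent `X₁ ∼ f₁`, `X₂ ∼ f₂`. -/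
noncomputable def convL (l : ℝ) (f₁ f₂ : ℝ → ℝ) (x : ℝ) : ℝ :=
  (Real.sqrt (1 - l ^ 2))⁻¹ *
    ∫ y, f₁ y * f₂ ((x - l * y) / Real.sqrt (1 - l ^ 2))

/-- Tail variance (second moment outside a ball) of a density `f`. -/
noncomputable def tailVar (f : ℝ → ℝ) (R : ℝ) : ℝ :=
  ∫ x in {x : ℝ | R ≤ |x|}, x ^ 2 * f x

/-- Entropy jump of two densities. -/
noncomputable def entJump (l : ℝ) (f₁ f₂ : ℝ → ℝ) : ℝ :=
  diffEntropy (convL l f₁ f₂) - (l ^ 2 * diffEntropy f₁ + (1 - l ^ 2) * diffEntropy f₂)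

section AuxLemmas

open Function

lemma gd_nonneg (a x : ℝ) : 0 ≤ gaussDensity a x :=
  mul_nonneg (inv_nonneg.2 (Real.sqrt_nonneg _)) (Real.exp_pos _).le

lemma gd_continuous (a : ℝ) : Continuous (gaussDensity a) := by
  unfold gaussDensity; fun_prop

lemma gd_le {a : ℝ} (ha : 0 < a) (x : ℝ) :
    gaussDensity a x ≤ (Real.sqrt (2 * Real.pi * a))⁻¹ := by
  unfold gaussDensity
  have h1 : Real.exp (-x ^ 2 / (2 * a)) ≤ 1 := by
    rw [Real.exp_le_one_iff]
    apply div_nonpos_of_nonpos_of_nonneg (neg_nonpos.2 (sq_nonneg x)) (by positivity)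
  exact mul_le_of_le_one_right (inv_nonneg.2 (Real.sqrt_nonneg _)) h1

lemma gd_integrable {a : ℝ} (ha : 0 < a) : Integrable (gaussDensity a) := by
  have h : Integrable (fun x : ℝ => Real.exp (-(2*a)⁻¹ * x ^ 2)) :=
    integrable_exp_neg_mul_sq (inv_pos.2 (by linarith))
  have h2 := h.const_mul (Real.sqrt (2 * Real.pi * a))⁻¹
  have heq : (fun x : ℝ => (Real.sqrt (2 * Real.pi * a))⁻¹ * Real.exp (-(2*a)⁻¹ * x ^ 2))
      = gaussDensity a := by
    funext x
    unfold gaussDensity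
    rw [show -(2*a)⁻¹ * x ^ 2 = -x ^ 2 / (2*a) by ring]
  rwa [heq] at h2

lemma gd_integral {a : ℝ} (ha : 0 < a) : ∫ x, gaussDensity a x = 1 := by
  have h : (fun x : ℝ => gaussDensity a x)
      = fun x : ℝ => (Real.sqrt (2 * Real.pi * a))⁻¹ * Real.exp (-(2*a)⁻¹ * x ^ 2) := by
    funext x
    unfold gaussDensity
    rw [show -(2*a)⁻¹ * x ^ 2 = -x ^ 2 / (2*a) by ring]
  rw [h, MeasureTheory.integral_const_mul, integral_gaussian]
  rw [show Real.pi / (2*a)⁻¹ = 2 * Real.pi * a by field_simp]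
  rw [inv_mul_cancel₀ (Real.sqrt_ne_zero'.2 (by positivity))]

lemma gd_mul_arg {a k : ℝ} (ha : 0 < a) (hk : 0 < k) (w : ℝ) :
    gaussDensity a (k * w) = k⁻¹ * gaussDensity (a / k ^ 2) w := by
  unfold gaussDensity
  have hs : Real.sqrt (2 * Real.pi * (a / k ^ 2)) = Real.sqrt (2 * Real.pi * a) / k := by
    rw [show 2 * Real.pi * (a / k ^ 2) = (2 * Real.pi * a) / k ^ 2 by ring,
      Real.sqrt_div (by positivity), Real.sqrt_sq hk.le]
  rw [hs, show -w ^ 2 / (2 * (a / k ^ 2)) = -(k * w) ^ 2 / (2 * a) from by field_simp]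
  have h0 : Real.sqrt (2 * Real.pi * a) ≠ 0 := Real.sqrt_ne_zero'.2 (by positivity)
  field_simp

lemma gd_mul {a b : ℝ} (ha : 0 < a) (hb : 0 < b) (m z : ℝ) :
    gaussDensity a z * gaussDensity b (m - z)
      = gaussDensity (a + b) m * gaussDensity (a * b / (a + b)) (z - a * m / (a + b)) := by
  have hab : 0 < a + b := by linarith
  have hmul : ∀ c₁ c₂ e₁ e₂ : ℝ,
      (c₁ * Real.exp e₁) * (c₂ * Real.exp e₂) = (c₁ * c₂) * Real.exp (e₁ + e₂) := by
    intros c₁ c₂ e₁ e₂; rw [Real.exp_add]; ring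
  unfold gaussDensity
  rw [hmul, hmul]
  have hC : (Real.sqrt (2 * Real.pi * a))⁻¹ * (Real.sqrt (2 * Real.pi * b))⁻¹
      = (Real.sqrt (2 * Real.pi * (a + b)))⁻¹ * (Real.sqrt (2 * Real.pi * (a * b / (a + b))))⁻¹ := by
    rw [← mul_inv, ← mul_inv, ← Real.sqrt_mul (by positivity), ← Real.sqrt_mul (by positivity)]
    congr 2
    field_simp
  have hE : -z ^ 2 / (2 * a) + -(m - z) ^ 2 / (2 * b)
      = -m ^ 2 / (2 * (a + b)) + -(z - a * m / (a + b)) ^ 2 / (2 * (a * b / (a + b))) := by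
    field_simp
    ring
  rw [hC, hE]

lemma gd_conv {a b : ℝ} (ha : 0 < a) (hb : 0 < b) (m : ℝ) :
    ∫ z, gaussDensity a z * gaussDensity b (m - z) = gaussDensity (a + b) m := by
  simp_rw [gd_mul ha hb m]
  rw [MeasureTheory.integral_const_mul,
    integral_sub_right_eq_self (gaussDensity (a * b / (a + b))) (a * m / (a + b)),
    gd_integral (by positivity), mul_one]

lemma subst_div_sub (h : ℝ → ℝ) {s : ℝ} (hs : 0 < s) (b : ℝ) :
    ∫ y, h ((y - b) / s) = s * ∫ w, h w := by
  have h1 : (fun y : ℝ => h ((y - b) / s)) = fun y : ℝ => (fun z => h (z - b / s)) (y / s) := by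
    funext y
    simp only
    rw [show y / s - b / s = (y - b) / s by ring]
  rw [h1, MeasureTheory.Measure.integral_comp_div (fun z => h (z - b / s)) s,
    integral_sub_right_eq_self, smul_eq_mul, abs_of_pos hs]

lemma key_gauss {a s lam : ℝ} (ha : 0 < a) (hs : 0 < s) (hl : 0 < lam)
    (hsl : s ^ 2 + lam ^ 2 = 1) (x c d : ℝ) :
    ∫ y, gaussDensity a (y - c) * gaussDensity a ((x - lam * y) / s - d)
      = s * gaussDensity a (x - lam * c - s * d) := by
  have hk : 0 < lam / s := by positivity
  set k := lam / s with hkdef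
  set M := (x / s - d) / k with hM
  have h1 : ∀ y : ℝ, gaussDensity a ((x - lam * y) / s - d)
      = k⁻¹ * gaussDensity (a / k ^ 2) (M - y) := by
    intro y
    rw [← gd_mul_arg ha hk]
    congr 1
    rw [hM, hkdef]
    field_simp
    ring
  simp_rw [h1]
  have h2 : ∀ y : ℝ, gaussDensity a (y - c) * (k⁻¹ * gaussDensity (a / k ^ 2) (M - y))
      = k⁻¹ * ((fun z => gaussDensity a z * gaussDensity (a / k ^ 2) ((M - c) - z)) (y - c)) := by
    intro y
    simp only
    rw [show M - c - (y - c) = M - y by ring]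
    ring
  simp_rw [h2]
  rw [MeasureTheory.integral_const_mul, integral_sub_right_eq_self
      (fun z => gaussDensity a z * gaussDensity (a / k ^ 2) ((M - c) - z)) c]
  rw [gd_conv ha (by positivity)]
  have e1 : a + a / k ^ 2 = a / lam ^ 2 := by
    rw [hkdef]
    field_simp
    nlinarith [hsl]
  have e2 : M - c = (x - lam * c - s * d) / lam := by
    rw [hM, hkdef]
    field_simp
    ring
  rw [e1, e2]
  have e3 := gd_mul_arg ha hl ((x - lam * c - s * d) / lam)
  rw [show lam * ((x - lam * c - s * d) / lam) = x - lam * c - s * d from by field_simp] at e3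
  rw [e3, hkdef]
  field_simp

/-- First swap: pdf-kernel double integral against a bounded measurable weight. -/
lemma swap1 {f : ℝ → ℝ} (hfm : Measurable f) (hf0 : ∀ x, 0 ≤ f x) (hfi : Integrable f)
    {a : ℝ} (ha : 0 < a) (e : ℝ) (φ : ℝ → ℝ) (hφm : Measurable φ)
    (C : ℝ) (hφb : ∀ z, |φ z| ≤ C) :
    ∫ y, (∫ u, f u * gaussDensity a (y - e * u)) * φ y
      = ∫ u, f u * ∫ y, gaussDensity a (y - e * u) * φ y := by
  have hGm : Measurable (fun p : ℝ × ℝ => f p.2 * gaussDensity a (p.1 - e * p.2)) :=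
    (hfm.comp measurable_snd).mul
      ((gd_continuous a).measurable.comp (measurable_fst.sub (measurable_snd.const_mul e)))
  have hGi : Integrable (fun p : ℝ × ℝ => f p.2 * gaussDensity a (p.1 - e * p.2))
      (volume.prod volume) := by
    rw [integrable_prod_iff' hGm.aestronglyMeasurable]
    constructor
    · exact Filter.Eventually.of_forall fun u =>
        ((gd_integrable ha).comp_sub_right (e * u)).const_mul (f u)
    · have hcongr : ∀ u : ℝ, (∫ y, ‖f u * gaussDensity a (y - e * u)‖) = f u := by
        intro u
        have h0 : ∀ y, ‖f u * gaussDensity a (y - e * u)‖ = f u * gaussDensity a (y - e * u) :=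
          fun y => by
            rw [Real.norm_eq_abs, abs_of_nonneg (mul_nonneg (hf0 u) (gd_nonneg _ _))]
        simp_rw [h0]
        rw [MeasureTheory.integral_const_mul,
          integral_sub_right_eq_self (gaussDensity a) (e * u), gd_integral ha, mul_one]
      exact (integrable_congr (Filter.Eventually.of_forall fun u => (hcongr u).symm)).1 hfi
  have hFi : Integrable (fun p : ℝ × ℝ => f p.2 * gaussDensity a (p.1 - e * p.2) * φ p.1)
      (volume.prod volume) := by
    have : ∀ p : ℝ × ℝ, f p.2 * gaussDensity a (p.1 - e * p.2) * φ p.1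
        = φ p.1 * (f p.2 * gaussDensity a (p.1 - e * p.2)) := fun p => by ring
    simp_rw [this]
    exact hGi.bdd_mul (c := C) ((hφm.comp measurable_fst)).aestronglyMeasurable
      (Filter.Eventually.of_forall fun p => by rw [Real.norm_eq_abs]; exact hφb p.1)
  calc ∫ y, (∫ u, f u * gaussDensity a (y - e * u)) * φ y
      = ∫ y, ∫ u, f u * gaussDensity a (y - e * u) * φ y := by
        congr 1; funext y; rw [← MeasureTheory.integral_mul_const]
    _ = ∫ u, ∫ y, f u * gaussDensity a (y - e * u) * φ y :=
        integral_integral_swap (f := fun y u => f u * gaussDensity a (y - e * u) * φ y) hFi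
    _ = ∫ u, f u * ∫ y, gaussDensity a (y - e * u) * φ y := by
        congr 1; funext u
        simp_rw [mul_assoc]
        rw [MeasureTheory.integral_const_mul]

/-- Second swap: integrable nonneg weight against pdf-kernel with measurable argument. -/
lemma swap2 {f : ℝ → ℝ} (hfm : Measurable f) (hf0 : ∀ x, 0 ≤ f x) (hfi : Integrable f)
    (hf1 : ∫ x, f x = 1)
    {a : ℝ} (ha : 0 < a) (e : ℝ) (ψ w : ℝ → ℝ) (hψm : Measurable ψ) (hψ0 : ∀ y, 0 ≤ ψ y)
    (hψi : Integrable ψ) (hw : Measurable w) :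
    ∫ y, ψ y * ∫ v, f v * gaussDensity a (w y - e * v)
      = ∫ v, f v * ∫ y, ψ y * gaussDensity a (w y - e * v) := by
  set M : ℝ := (Real.sqrt (2 * Real.pi * a))⁻¹ with hMdef
  have hM0 : 0 ≤ M := inv_nonneg.2 (Real.sqrt_nonneg _)
  have hkm : Measurable (fun p : ℝ × ℝ => gaussDensity a (w p.1 - e * p.2)) :=
    (gd_continuous a).measurable.comp ((hw.comp measurable_fst).sub (measurable_snd.const_mul e))
  have hFm : Measurable (fun p : ℝ × ℝ => ψ p.1 * (f p.2 * gaussDensity a (w p.1 - e * p.2))) :=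
    (hψm.comp measurable_fst).mul ((hfm.comp measurable_snd).mul hkm)
  have hsect : ∀ y : ℝ, Integrable (fun v => f v * gaussDensity a (w y - e * v)) := by
    intro y
    have hb := hfi.bdd_mul (c := M)
      (((gd_continuous a).measurable.comp ((measurable_const (a := w y)).sub
        (measurable_id.const_mul e))).aestronglyMeasurable)
      (Filter.Eventually.of_forall fun v => by
        simp only [Function.comp_apply, id_eq]
        rw [Real.norm_eq_abs, abs_of_nonneg (gd_nonneg _ _)]; exact gd_le ha _)
    refine hb.congr (Filter.Eventually.of_forall fun v => ?_)
    simp only [Function.comp_apply, id_eq, Pi.sub_apply]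
    ring
  have hsect0 : ∀ y : ℝ, 0 ≤ ∫ v, f v * gaussDensity a (w y - e * v) := fun y =>
    integral_nonneg fun v => mul_nonneg (hf0 v) (gd_nonneg _ _)
  have hsectle : ∀ y : ℝ, (∫ v, f v * gaussDensity a (w y - e * v)) ≤ M := by
    intro y
    calc (∫ v, f v * gaussDensity a (w y - e * v)) ≤ ∫ v, f v * M :=
          integral_mono (hsect y) (hfi.mul_const M) fun v =>
            mul_le_mul_of_nonneg_left (gd_le ha _) (hf0 v)
      _ = M := by rw [MeasureTheory.integral_mul_const, hf1, one_mul]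
  have hFi : Integrable (fun p : ℝ × ℝ => ψ p.1 * (f p.2 * gaussDensity a (w p.1 - e * p.2)))
      (volume.prod volume) := by
    rw [integrable_prod_iff hFm.aestronglyMeasurable]
    constructor
    · exact Filter.Eventually.of_forall fun y => (hsect y).const_mul (ψ y)
    · have hnorm : ∀ y : ℝ,
          (∫ v, ‖ψ y * (f v * gaussDensity a (w y - e * v))‖)
            = ψ y * ∫ v, f v * gaussDensity a (w y - e * v) := by
        intro y
        have h0 : ∀ v, ‖ψ y * (f v * gaussDensity a (w y - e * v))‖
            = ψ y * (f v * gaussDensity a (w y - e * v)) := fun v => by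
          rw [Real.norm_eq_abs, abs_of_nonneg
            (mul_nonneg (hψ0 y) (mul_nonneg (hf0 v) (gd_nonneg _ _)))]
        simp_rw [h0]
        rw [MeasureTheory.integral_const_mul]
      refine (hψi.mul_const M).mono' ?_ (Filter.Eventually.of_forall fun y => ?_)
      · exact (hFm.aestronglyMeasurable.norm.integral_prod_right')
      · rw [hnorm y, Real.norm_eq_abs, abs_of_nonneg (mul_nonneg (hψ0 y) (hsect0 y))]
        exact mul_le_mul_of_nonneg_left (hsectle y) (hψ0 y)
  calc ∫ y, ψ y * ∫ v, f v * gaussDensity a (w y - e * v)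
      = ∫ y, ∫ v, ψ y * (f v * gaussDensity a (w y - e * v)) := by
        congr 1; funext y; rw [MeasureTheory.integral_const_mul]
    _ = ∫ v, ∫ y, ψ y * (f v * gaussDensity a (w y - e * v)) :=
        integral_integral_swap
          (f := fun y v => ψ y * (f v * gaussDensity a (w y - e * v))) hFi
    _ = ∫ v, f v * ∫ y, ψ y * gaussDensity a (w y - e * v) := by
        congr 1; funext v
        have : ∀ y : ℝ, ψ y * (f v * gaussDensity a (w y - e * v))
            = f v * (ψ y * gaussDensity a (w y - e * v)) := fun y => by ring
        simp_rw [this]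
        rw [MeasureTheory.integral_const_mul]

/-- Third swap: convolution-type double integral against a bounded weight. -/
lemma swap3 {f₁ f₂ : ℝ → ℝ} (h₁m : Measurable f₁) (h₁0 : ∀ x, 0 ≤ f₁ x) (h₁i : Integrable f₁)
    (h₂m : Measurable f₂) (h₂0 : ∀ x, 0 ≤ f₂ x) (h₂i : Integrable f₂) (h₂1 : ∫ x, f₂ x = 1)
    {s lam : ℝ} (hs : 0 < s) (ψ : ℝ → ℝ) (hψm : Measurable ψ) (hψ0 : ∀ z, 0 ≤ ψ z)
    (C : ℝ) (hψb : ∀ z, ψ z ≤ C) :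
    ∫ y, (∫ u, f₁ u * f₂ ((y - lam * u) / s)) * ψ y
      = ∫ u, f₁ u * ∫ y, f₂ ((y - lam * u) / s) * ψ y := by
  have hFm : Measurable (fun p : ℝ × ℝ => f₁ p.2 * f₂ ((p.1 - lam * p.2) / s) * ψ p.1) :=
    ((h₁m.comp measurable_snd).mul
      (h₂m.comp ((measurable_fst.sub (measurable_snd.const_mul lam)).div_const s))).mul
      (hψm.comp measurable_fst)
  have hcomp : ∀ u : ℝ, Integrable (fun y => f₂ ((y - lam * u) / s)) := fun u =>
    (h₂i.comp_div hs.ne').comp_sub_right (lam * u)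
  have hcm : ∀ u : ℝ, Measurable (fun y => f₂ ((y - lam * u) / s)) := fun u =>
    h₂m.comp ((measurable_id.sub_const (lam * u)).div_const s)
  have hsect : ∀ u : ℝ, Integrable (fun y => f₂ ((y - lam * u) / s) * ψ y) := by
    intro u
    have hb := (hcomp u).bdd_mul (c := |C|) hψm.aestronglyMeasurable
      (Filter.Eventually.of_forall fun y => by
        rw [Real.norm_eq_abs, abs_of_nonneg (hψ0 y)]
        exact (hψb y).trans (le_abs_self C))
    refine hb.congr (Filter.Eventually.of_forall fun y => by simp only; ring)
  have hcompint : ∀ u : ℝ, (∫ y, f₂ ((y - lam * u) / s)) = s := by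
    intro u
    rw [subst_div_sub f₂ hs (lam * u), h₂1, mul_one]
  have hsectle : ∀ u : ℝ, (∫ y, f₂ ((y - lam * u) / s) * ψ y) ≤ C * s := by
    intro u
    calc (∫ y, f₂ ((y - lam * u) / s) * ψ y) ≤ ∫ y, f₂ ((y - lam * u) / s) * C :=
          integral_mono (hsect u) ((hcomp u).mul_const C) fun y =>
            mul_le_mul_of_nonneg_left (hψb y) (h₂0 _)
      _ = C * s := by rw [MeasureTheory.integral_mul_const, hcompint u]; ring
  have hsect0 : ∀ u : ℝ, 0 ≤ ∫ y, f₂ ((y - lam * u) / s) * ψ y := fun u =>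
    integral_nonneg fun y => mul_nonneg (h₂0 _) (hψ0 y)
  have hFi : Integrable (fun p : ℝ × ℝ => f₁ p.2 * f₂ ((p.1 - lam * p.2) / s) * ψ p.1)
      (volume.prod volume) := by
    rw [integrable_prod_iff' hFm.aestronglyMeasurable]
    constructor
    · refine Filter.Eventually.of_forall fun u => ?_
      have := (hsect u).const_mul (f₁ u)
      refine this.congr (Filter.Eventually.of_forall fun y => by simp only; ring)
    · have hnorm : ∀ u : ℝ,
          (∫ y, ‖f₁ u * f₂ ((y - lam * u) / s) * ψ y‖)
            = f₁ u * ∫ y, f₂ ((y - lam * u) / s) * ψ y := by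
        intro u
        have h0 : ∀ y, ‖f₁ u * f₂ ((y - lam * u) / s) * ψ y‖
            = f₁ u * (f₂ ((y - lam * u) / s) * ψ y) := fun y => by
          rw [Real.norm_eq_abs, abs_of_nonneg
            (mul_nonneg (mul_nonneg (h₁0 u) (h₂0 _)) (hψ0 y)), mul_assoc]
        simp_rw [h0]
        rw [MeasureTheory.integral_const_mul]
      refine (h₁i.mul_const (C * s)).mono' ?_ (Filter.Eventually.of_forall fun u => ?_)
      · have hS : AEStronglyMeasurable
            (fun p : ℝ × ℝ => ‖f₁ p.2 * f₂ ((p.1 - lam * p.2) / s) * ψ p.1‖)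
            (volume.prod volume) := hFm.aestronglyMeasurable.norm
        exact hS.prod_swap.integral_prod_right'
      · rw [hnorm u, Real.norm_eq_abs, abs_of_nonneg (mul_nonneg (h₁0 u) (hsect0 u))]
        exact mul_le_mul_of_nonneg_left (hsectle u) (h₁0 u)
  calc ∫ y, (∫ u, f₁ u * f₂ ((y - lam * u) / s)) * ψ y
      = ∫ y, ∫ u, f₁ u * f₂ ((y - lam * u) / s) * ψ y := by
        congr 1; funext y; rw [← MeasureTheory.integral_mul_const]
    _ = ∫ u, ∫ y, f₁ u * f₂ ((y - lam * u) / s) * ψ y :=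
        integral_integral_swap
          (f := fun y u => f₁ u * f₂ ((y - lam * u) / s) * ψ y) hFi
    _ = ∫ u, f₁ u * ∫ y, f₂ ((y - lam * u) / s) * ψ y := by
        congr 1; funext u
        simp_rw [mul_assoc]
        rw [MeasureTheory.integral_const_mul]

lemma pdf_integrable' {f : ℝ → ℝ} (h : ∫ x, f x = 1) : Integrable f := by
  by_contra hc
  rw [MeasureTheory.integral_undef hc] at h
  exact zero_ne_one h

lemma ou_int {f : ℝ → ℝ} (hfm : Measurable f) (hf0 : ∀ x, 0 ≤ f x) (hfi : Integrable f)
    {a : ℝ} (ha : 0 < a) (e z : ℝ) :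
    Integrable (fun v => f v * gaussDensity a (z - e * v)) := by
  have hb := hfi.bdd_mul (c := (Real.sqrt (2 * Real.pi * a))⁻¹)
    (((gd_continuous a).measurable.comp ((measurable_const (a := z)).sub
      (measurable_id.const_mul e))).aestronglyMeasurable)
    (Filter.Eventually.of_forall fun v => by
      simp only [Function.comp_apply, id_eq]
      rw [Real.norm_eq_abs, abs_of_nonneg (gd_nonneg _ _)]; exact gd_le ha _)
  refine hb.congr (Filter.Eventually.of_forall fun v => ?_)
  simp only [Function.comp_apply, id_eq, Pi.sub_apply]
  ring

lemma ou_abs_le {f : ℝ → ℝ} (hfm : Measurable f) (hf0 : ∀ x, 0 ≤ f x) (hfi : Integrable f)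
    (hf1 : ∫ x, f x = 1) {a : ℝ} (ha : 0 < a) (e z : ℝ) :
    |∫ v, f v * gaussDensity a (z - e * v)| ≤ (Real.sqrt (2 * Real.pi * a))⁻¹ := by
  rw [abs_of_nonneg (integral_nonneg fun v => mul_nonneg (hf0 v) (gd_nonneg _ _))]
  calc (∫ v, f v * gaussDensity a (z - e * v)) ≤ ∫ v, f v * (Real.sqrt (2 * Real.pi * a))⁻¹ :=
        integral_mono (ou_int hfm hf0 hfi ha e z) (hfi.mul_const _) fun v =>
          mul_le_mul_of_nonneg_left (gd_le ha _) (hf0 v)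
    _ = (Real.sqrt (2 * Real.pi * a))⁻¹ := by
        rw [MeasureTheory.integral_mul_const, hf1, one_mul]

end AuxLemmas

/-- the adjoint Ornstein-Uhlenbeck semigroup commutes with the scaled
convolution: `(p*_t f₁) *_λ (p*_t f₂) = p*_t (f₁ *_λ f₂)`. -/
theorem stmt3 (t : ℝ) (ht : 0 ≤ t) (lam : ℝ) (hlam : lam ∈ Set.Ioo (0 : ℝ) 1)
    (f₁ f₂ : ℝ → ℝ) (h₁ : IsPdf f₁) (h₂ : IsPdf f₂) :
    convL lam (OUStar t f₁) (OUStar t f₂) = OUStar t (convL lam f₁ f₂) := by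
  obtain ⟨hl0, hl1⟩ := hlam
  obtain ⟨h₁m, h₁0, h₁1⟩ := h₁
  obtain ⟨h₂m, h₂0, h₂1⟩ := h₂
  have h₁i : Integrable f₁ := pdf_integrable' h₁1
  have h₂i : Integrable f₂ := pdf_integrable' h₂1
  rcases eq_or_lt_of_le ht with rfl | ht'
  · have hg : ∀ z : ℝ, gaussDensity 0 z = 0 := fun z => by simp [gaussDensity]
    funext x
    simp [convL, OUStar, hg]
  · have ha : 0 < 1 - Real.exp (-2 * t) := by
      have : Real.exp (-2 * t) < 1 := Real.exp_lt_one_iff.2 (by linarith)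
      linarith
    set a := 1 - Real.exp (-2 * t) with hadef
    set e := Real.exp (-t) with hedef
    have hs1 : (0 : ℝ) < 1 - lam ^ 2 := by nlinarith
    set s := Real.sqrt (1 - lam ^ 2) with hsdef
    have hs : 0 < s := Real.sqrt_pos.2 hs1
    have hs2 : s ^ 2 = 1 - lam ^ 2 := Real.sq_sqrt hs1.le
    have hsl : s ^ 2 + lam ^ 2 = 1 := by rw [hs2]; ring
    set M := (Real.sqrt (2 * Real.pi * a))⁻¹ with hMdef
    funext x
    show s⁻¹ * (∫ y, (∫ u, f₁ u * gaussDensity a (y - e * u)) *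
          (∫ v, f₂ v * gaussDensity a ((x - lam * y) / s - e * v)))
        = ∫ y, (s⁻¹ * ∫ u, f₁ u * f₂ ((y - lam * u) / s)) * gaussDensity a (x - e * y)
    -- the common value
    set T := ∫ u, f₁ u * ∫ v, f₂ v * gaussDensity a (x - e * (s * v + lam * u)) with hTdef
    have cancel : ∀ I : ℝ → ℝ, s⁻¹ * (∫ u, f₁ u * (s * I u)) = ∫ u, f₁ u * I u := by
      intro I
      have hc : ∀ u, f₁ u * (s * I u) = s * (f₁ u * I u) := fun u => by ring
      simp_rw [hc]
      rw [MeasureTheory.integral_const_mul, ← mul_assoc, inv_mul_cancel₀ hs.ne', one_mul]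
    -- LHS
    have hφm : Measurable (fun y : ℝ => ∫ v, f₂ v * gaussDensity a ((x - lam * y) / s - e * v)) := by
      have hK : Measurable (fun p : ℝ × ℝ =>
          f₂ p.2 * gaussDensity a ((x - lam * p.1) / s - e * p.2)) :=
        (h₂m.comp measurable_snd).mul ((gd_continuous a).measurable.comp
          ((((measurable_const (a := x)).sub (measurable_fst.const_mul lam)).div_const s).sub
            (measurable_snd.const_mul e)))
      exact hK.stronglyMeasurable.integral_prod_right'.measurable
    have step1 : ∫ y, (∫ u, f₁ u * gaussDensity a (y - e * u)) *
          (∫ v, f₂ v * gaussDensity a ((x - lam * y) / s - e * v))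
        = ∫ u, f₁ u * ∫ y, gaussDensity a (y - e * u) *
            ∫ v, f₂ v * gaussDensity a ((x - lam * y) / s - e * v) :=
      swap1 h₁m h₁0 h₁i ha e _ hφm M fun z => ou_abs_le h₂m h₂0 h₂i h₂1 ha e _
    have step2 : ∀ u : ℝ, ∫ y, gaussDensity a (y - e * u) *
          ∫ v, f₂ v * gaussDensity a ((x - lam * y) / s - e * v)
        = ∫ v, f₂ v * ∫ y, gaussDensity a (y - e * u) *
            gaussDensity a ((x - lam * y) / s - e * v) := fun u =>
      swap2 h₂m h₂0 h₂i h₂1 ha e (fun y => gaussDensity a (y - e * u))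
        (fun y => (x - lam * y) / s)
        ((gd_continuous a).measurable.comp (measurable_id.sub_const (e * u)))
        (fun y => gd_nonneg _ _)
        ((gd_integrable ha).comp_sub_right (e * u))
        (((measurable_const (a := x)).sub (measurable_id.const_mul lam)).div_const s)
    have step3 : ∀ u v : ℝ, ∫ y, gaussDensity a (y - e * u) *
          gaussDensity a ((x - lam * y) / s - e * v)
        = s * gaussDensity a (x - lam * (e * u) - s * (e * v)) := fun u v =>
      key_gauss ha hs hl0 hsl x (e * u) (e * v)
    have pull : ∀ u : ℝ, (∫ v, f₂ v * (s * gaussDensity a (x - lam * (e * u) - s * (e * v))))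
        = s * ∫ v, f₂ v * gaussDensity a (x - e * (s * v + lam * u)) := by
      intro u
      have hc : ∀ v : ℝ, f₂ v * (s * gaussDensity a (x - lam * (e * u) - s * (e * v)))
          = s * (f₂ v * gaussDensity a (x - e * (s * v + lam * u))) := by
        intro v
        rw [show x - lam * (e * u) - s * (e * v) = x - e * (s * v + lam * u) by ring]
        ring
      simp_rw [hc]
      rw [MeasureTheory.integral_const_mul]
    have hLHS : s⁻¹ * (∫ y, (∫ u, f₁ u * gaussDensity a (y - e * u)) *
          (∫ v, f₂ v * gaussDensity a ((x - lam * y) / s - e * v))) = T := by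
      rw [step1]
      have : ∀ u : ℝ, (∫ y, gaussDensity a (y - e * u) *
            ∫ v, f₂ v * gaussDensity a ((x - lam * y) / s - e * v))
          = s * ∫ v, f₂ v * gaussDensity a (x - e * (s * v + lam * u)) := by
        intro u
        rw [step2 u]
        have hc : ∀ v : ℝ, (∫ y, gaussDensity a (y - e * u) *
              gaussDensity a ((x - lam * y) / s - e * v))
            = s * gaussDensity a (x - lam * (e * u) - s * (e * v)) := step3 u
        simp_rw [hc]
        exact pull u
      simp_rw [this]
      exact cancel _
    -- RHS
    have r3 : ∀ u : ℝ, (∫ y, f₂ ((y - lam * u) / s) * gaussDensity a (x - e * y))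
        = s * ∫ v, f₂ v * gaussDensity a (x - e * (s * v + lam * u)) := by
      intro u
      have h := subst_div_sub
        (fun w => f₂ w * gaussDensity a (x - e * (s * w + lam * u))) hs (lam * u)
      calc (∫ y, f₂ ((y - lam * u) / s) * gaussDensity a (x - e * y))
          = ∫ y, (fun w => f₂ w * gaussDensity a (x - e * (s * w + lam * u)))
              ((y - lam * u) / s) := by
            congr 1
            funext y
            simp only
            rw [show s * ((y - lam * u) / s) + lam * u = y by field_simp; ring]
        _ = s * ∫ v, f₂ v * gaussDensity a (x - e * (s * v + lam * u)) := h
    have hRHS : (∫ y, (s⁻¹ * ∫ u, f₁ u * f₂ ((y - lam * u) / s)) *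
          gaussDensity a (x - e * y)) = T := by
      have hmv : ∀ y : ℝ, (s⁻¹ * ∫ u, f₁ u * f₂ ((y - lam * u) / s)) *
            gaussDensity a (x - e * y)
          = s⁻¹ * ((∫ u, f₁ u * f₂ ((y - lam * u) / s)) * gaussDensity a (x - e * y)) :=
        fun y => by ring
      simp_rw [hmv]
      rw [MeasureTheory.integral_const_mul]
      rw [swap3 h₁m h₁0 h₁i h₂m h₂0 h₂i h₂1 hs (fun y => gaussDensity a (x - e * y))
        ((gd_continuous a).measurable.comp ((measurable_const (a := x)).sub
          (measurable_id.const_mul e)))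
        (fun z => gd_nonneg _ _) M (fun z => gd_le ha _)]
      simp_rw [r3]
      exact cancel _
    rw [hLHS, hRHS]
end

section
/- Under the same setting (Y = Σ λᵢXᵢ for i.i.d. mean-zero Xᵢ with finite fourth moment and Σλᵢ²=1), the tail variance satisfies L_Y(R) ≤ min{ √((E[X⁴] + 3(E[X²])²)·E[X²]) / R , E[X²] } for all R ≥ 0. -/
open MeasureTheory ProbabilityTheory Real Filter Set

lemma aux16 {Ω : Type*} [MeasureSpace Ω] [IsProbabilityMeasure (ℙ : Measure Ω)]
    {n : ℕ} (Z : Fin n → Ω → ℝ) (hZm : ∀ i, Measurable (Z i))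
    (hindep : iIndepFun Z ℙ)
    (hint : ∀ i, ∀ k, 1 ≤ k → k ≤ 4 → Integrable (fun ω => (Z i ω) ^ k))
    (hm1 : ∀ i, (∫ ω, Z i ω) = 0) (s : Finset (Fin n)) :
    (∀ k, 1 ≤ k → k ≤ 4 → Integrable (fun ω => (∑ i ∈ s, Z i ω) ^ k)) ∧
    (∫ ω, (∑ i ∈ s, Z i ω)) = 0 ∧
    (∫ ω, (∑ i ∈ s, Z i ω) ^ 2) = (∑ i ∈ s, ∫ ω, (Z i ω) ^ 2) ∧
    (∫ ω, (∑ i ∈ s, Z i ω) ^ 4) ≤ (∑ i ∈ s, ∫ ω, (Z i ω) ^ 4)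
        + 3 * (∑ i ∈ s, ∫ ω, (Z i ω) ^ 2) ^ 2 := by
  classical
  induction s using Finset.induction_on with
  | empty =>
      refine ⟨fun k hk1 hk4 => ?_, by simp, by simp, by simp⟩
      simpa [zero_pow (by omega : k ≠ 0)] using (integrable_const (0:ℝ) (μ := (ℙ : Measure Ω)))
  | @insert j s hj ih =>
      obtain ⟨ihInt, ihE1, ihE2, ihE4⟩ := ih
      set S : Ω → ℝ := fun ω => ∑ i ∈ s, Z i ω with hSdef
      set W : Ω → ℝ := Z j with hWdef
      have hSW : IndepFun S W ℙ := by
        have h := hindep.indepFun_finsetSum_of_notMem hZm hj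
        have : (∑ i ∈ s, Z i) = S := by funext ω; simp [hSdef]
        rwa [this] at h
      have hprod : ∀ a b : ℕ, 1 ≤ a → a ≤ 4 → 1 ≤ b → b ≤ 4 →
          Integrable (fun ω => S ω ^ a * W ω ^ b) ∧
          (∫ ω, S ω ^ a * W ω ^ b) = (∫ ω, S ω ^ a) * (∫ ω, W ω ^ b) := by
        intro a b ha1 ha4 hb1 hb4
        have hIa : IndepFun (fun ω => S ω ^ a) (fun ω => W ω ^ b) ℙ :=
          hSW.comp (measurable_id.pow_const a) (measurable_id.pow_const b)
        exact ⟨hIa.integrable_mul (ihInt a ha1 ha4) (hint j b hb1 hb4),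
          hIa.integral_mul_eq_mul_integral (ihInt a ha1 ha4).aestronglyMeasurable
            (hint j b hb1 hb4).aestronglyMeasurable⟩
      have hins : ∀ ω, (∑ i ∈ insert j s, Z i ω) = W ω + S ω := by
        intro ω; rw [Finset.sum_insert hj]
      have hIk : ∀ k, 1 ≤ k → k ≤ 4 →
          Integrable (fun ω => (∑ i ∈ insert j s, Z i ω) ^ k) := by
        intro k hk1 hk4
        simp only [hins]
        interval_cases k
        · exact ((hint j 1 le_rfl (by norm_num)).add (ihInt 1 le_rfl (by norm_num))).congr
            (Filter.Eventually.of_forall fun ω => by simp [W, S])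
        · have he : (fun ω => (W ω + S ω) ^ 2)
              = fun ω => W ω ^ 2 + (2 * (S ω ^ 1 * W ω ^ 1) + S ω ^ 2) := by
            funext ω; ring
          rw [he]
          exact (hint j 2 (by norm_num) (by norm_num)).add
            (((hprod 1 1 le_rfl (by norm_num) le_rfl (by norm_num)).1.const_mul 2).add
              (ihInt 2 (by norm_num) (by norm_num)))
        · have he : (fun ω => (W ω + S ω) ^ 3)
              = fun ω => W ω ^ 3 + (3 * (S ω ^ 1 * W ω ^ 2) + (3 * (S ω ^ 2 * W ω ^ 1) + S ω ^ 3)) := by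
            funext ω; ring
          rw [he]
          exact (hint j 3 (by norm_num) (by norm_num)).add
            (((hprod 1 2 (by norm_num) (by norm_num) (by norm_num) (by norm_num)).1.const_mul 3).add
              (((hprod 2 1 (by norm_num) (by norm_num) (by norm_num) (by norm_num)).1.const_mul 3).add
                (ihInt 3 (by norm_num) (by norm_num))))
        · have he : (fun ω => (W ω + S ω) ^ 4)
              = fun ω => W ω ^ 4 + (4 * (S ω ^ 1 * W ω ^ 3) + (6 * (S ω ^ 2 * W ω ^ 2)
                  + (4 * (S ω ^ 3 * W ω ^ 1) + S ω ^ 4))) := by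
            funext ω; ring
          rw [he]
          exact (hint j 4 (by norm_num) (by norm_num)).add
            (((hprod 1 3 (by norm_num) (by norm_num) (by norm_num) (by norm_num)).1.const_mul 4).add
              (((hprod 2 2 (by norm_num) (by norm_num) (by norm_num) (by norm_num)).1.const_mul 6).add
                (((hprod 3 1 (by norm_num) (by norm_num) (by norm_num) (by norm_num)).1.const_mul 4).add
                  (ihInt 4 (by norm_num) (by norm_num)))))
      have hWint : Integrable W ℙ := by simpa using hint j 1 le_rfl (by norm_num)
      have hSint : Integrable S ℙ := by simpa using ihInt 1 le_rfl (by norm_num)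
      have hW1 : (∫ ω, W ω ^ 1) = 0 := by simpa using hm1 j
      have hS1 : (∫ ω, S ω ^ 1) = 0 := by simpa using ihE1
      have hSW11 : (∫ ω, S ω ^ 1 * W ω ^ 1) = 0 := by
        rw [(hprod 1 1 le_rfl (by norm_num) le_rfl (by norm_num)).2, hS1, zero_mul]
      have hSW13 : (∫ ω, S ω ^ 1 * W ω ^ 3) = 0 := by
        rw [(hprod 1 3 le_rfl (by norm_num) (by norm_num) (by norm_num)).2, hS1, zero_mul]
      have hSW31 : (∫ ω, S ω ^ 3 * W ω ^ 1) = 0 := by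
        rw [(hprod 3 1 (by norm_num) (by norm_num) le_rfl (by norm_num)).2, hW1, mul_zero]
      have hSW22 : (∫ ω, S ω ^ 2 * W ω ^ 2) = (∫ ω, S ω ^ 2) * (∫ ω, W ω ^ 2) :=
        (hprod 2 2 (by norm_num) (by norm_num) (by norm_num) (by norm_num)).2
      refine ⟨hIk, ?_, ?_, ?_⟩
      · simp only [hins]
        rw [integral_add hWint hSint]
        have : (∫ ω, W ω) = 0 := hm1 j
        rw [this]
        simpa using ihE1
      · simp only [hins, Finset.sum_insert hj]
        have he : (fun ω => (W ω + S ω) ^ 2)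
            = fun ω => W ω ^ 2 + (2 * (S ω ^ 1 * W ω ^ 1) + S ω ^ 2) := by
          funext ω; ring
        have t1 : Integrable (fun ω => 2 * (S ω ^ 1 * W ω ^ 1)) ℙ :=
          (hprod 1 1 le_rfl (by norm_num) le_rfl (by norm_num)).1.const_mul 2
        have t2 : Integrable (fun ω => S ω ^ 2) ℙ := ihInt 2 (by norm_num) (by norm_num)
        have t3 : Integrable (fun ω => 2 * (S ω ^ 1 * W ω ^ 1) + S ω ^ 2) ℙ := t1.add t2
        rw [he, integral_add (hint j 2 (by norm_num) (by norm_num)) t3,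
          integral_add t1 t2, integral_const_mul, hSW11, ihE2]
        ring
      · simp only [hins, Finset.sum_insert hj]
        have he : (fun ω => (W ω + S ω) ^ 4)
            = fun ω => W ω ^ 4 + (4 * (S ω ^ 1 * W ω ^ 3) + (6 * (S ω ^ 2 * W ω ^ 2)
                + (4 * (S ω ^ 3 * W ω ^ 1) + S ω ^ 4))) := by
          funext ω; ring
        have i13 : Integrable (fun ω => 4 * (S ω ^ 1 * W ω ^ 3)) ℙ :=
          (hprod 1 3 le_rfl (by norm_num) (by norm_num) (by norm_num)).1.const_mul 4
        have i22 : Integrable (fun ω => 6 * (S ω ^ 2 * W ω ^ 2)) ℙ :=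
          (hprod 2 2 (by norm_num) (by norm_num) (by norm_num) (by norm_num)).1.const_mul 6
        have i31 : Integrable (fun ω => 4 * (S ω ^ 3 * W ω ^ 1)) ℙ :=
          (hprod 3 1 (by norm_num) (by norm_num) le_rfl (by norm_num)).1.const_mul 4
        have i4S : Integrable (fun ω => S ω ^ 4) ℙ := ihInt 4 (by norm_num) (by norm_num)
        have t1 : Integrable (fun ω => 4 * (S ω ^ 3 * W ω ^ 1) + S ω ^ 4) ℙ := i31.add i4S
        have t2 : Integrable (fun ω => 6 * (S ω ^ 2 * W ω ^ 2) + (4 * (S ω ^ 3 * W ω ^ 1) + S ω ^ 4)) ℙ := i22.add t1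
        have t3 : Integrable (fun ω => 4 * (S ω ^ 1 * W ω ^ 3) + (6 * (S ω ^ 2 * W ω ^ 2) + (4 * (S ω ^ 3 * W ω ^ 1) + S ω ^ 4))) ℙ := i13.add t2
        rw [he, integral_add (hint j 4 (by norm_num) (by norm_num)) t3,
          integral_add i13 t2, integral_add i22 t1, integral_add i31 i4S,
          integral_const_mul, integral_const_mul, integral_const_mul,
          hSW13, hSW31, hSW22, ihE2]
        have hvj : 0 ≤ (∫ ω, W ω ^ 2) := integral_nonneg fun ω => sq_nonneg _
        nlinarith [ihE4, sq_nonneg (∫ ω, W ω ^ 2), sq_nonneg ((∫ ω, W ω ^ 2) + ∑ i ∈ s, ∫ ω, Z i ω ^ 2)]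

/-- in the setting of i.i.d. mean-zero `Xᵢ` with finite fourth moment and
`∑ λᵢ² = 1`, `Y = ∑ λᵢ Xᵢ` has tail variance
`L_Y(R) ≤ min (√((E[X⁴] + 3 (E[X²])²) E[X²]) / R) (E[X²])` for every `R > 0`, and
`L_Y(R) ≤ E[X²]` for every `R ≥ 0`. -/
theorem stmt16 {Ω : Type*} [MeasureSpace Ω] [IsProbabilityMeasure (ℙ : Measure Ω)]
    (n : ℕ) (X : Fin n → Ω → ℝ) (X0 : Ω → ℝ)
    (hXm : ∀ i, Measurable (X i)) (hX0m : Measurable X0)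
    (hindep : iIndepFun X ℙ)
    (hid : ∀ i, Measure.map (X i) ℙ = Measure.map X0 ℙ)
    (hmean : ∫ ω, X0 ω = 0)
    (h4 : Integrable (fun ω => (X0 ω) ^ 4))
    (lam : Fin n → ℝ) (hlam : ∀ i, lam i ∈ Set.Ioo (0 : ℝ) 1)
    (hsum : ∑ i, (lam i) ^ 2 = 1) :
    (∀ R : ℝ, 0 ≤ R →
      (∫ ω in {ω | R ≤ |∑ i, lam i * X i ω|}, (∑ i, lam i * X i ω) ^ 2) ≤
        ∫ ω, (X0 ω) ^ 2) ∧
    (∀ R : ℝ, 0 < R →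
      (∫ ω in {ω | R ≤ |∑ i, lam i * X i ω|}, (∑ i, lam i * X i ω) ^ 2) ≤
        min (Real.sqrt (((∫ ω, (X0 ω) ^ 4) + 3 * (∫ ω, (X0 ω) ^ 2) ^ 2) *
              (∫ ω, (X0 ω) ^ 2)) / R)
            (∫ ω, (X0 ω) ^ 2)) := by
  classical
  have habs : ∀ (x : ℝ) (k : ℕ), k ≤ 4 → |x| ^ k ≤ 1 + x ^ 4 := by
    intro x k hk
    have hx4 : (0:ℝ) ≤ x ^ 4 := by positivity
    rcases le_total (|x|) 1 with h | h
    · have := pow_le_one₀ (abs_nonneg x) h (n := k)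
      linarith
    · have h2 : |x| ^ k ≤ |x| ^ 4 := pow_le_pow_right₀ h hk
      have h3 : |x| ^ 4 = x ^ 4 := by
        rw [← abs_pow]; exact abs_of_nonneg hx4
      linarith [h2.trans_eq h3]
  have hbound : ∀ (k : ℕ), k ≤ 4 → Integrable (fun ω => X0 ω ^ k) ℙ := by
    intro k hk
    have hgint : Integrable (fun ω => 1 + X0 ω ^ 4) ℙ := (integrable_const 1).add h4
    refine hgint.mono ((hX0m.pow_const k).aestronglyMeasurable) ?_
    filter_upwards with ω
    have h1 : ‖X0 ω ^ k‖ = |X0 ω| ^ k := by rw [Real.norm_eq_abs, abs_pow]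
    have h2 : ‖(1:ℝ) + X0 ω ^ 4‖ = 1 + X0 ω ^ 4 := by
      rw [Real.norm_eq_abs]; exact abs_of_nonneg (by positivity)
    rw [h1, h2]; exact habs _ k hk
  have hXk : ∀ i (k : ℕ), k ≤ 4 →
      Integrable (fun ω => X i ω ^ k) ℙ ∧ (∫ ω, X i ω ^ k) = ∫ ω, X0 ω ^ k := by
    intro i k hk
    have hmk : Measurable fun x : ℝ => x ^ k := measurable_id.pow_const k
    constructor
    · have h1 : Integrable (fun x : ℝ => x ^ k) (Measure.map X0 ℙ) :=
        (integrable_map_measure hmk.aestronglyMeasurable hX0m.aemeasurable).2 (hbound k hk)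
      have h2 : Integrable (fun x : ℝ => x ^ k) (Measure.map (X i) ℙ) := by
        rw [hid i]; exact h1
      exact (integrable_map_measure hmk.aestronglyMeasurable (hXm i).aemeasurable).1 h2
    · calc (∫ ω, X i ω ^ k) = ∫ x, x ^ k ∂(Measure.map (X i) ℙ) :=
          (integral_map (hXm i).aemeasurable hmk.aestronglyMeasurable).symm
        _ = ∫ x, x ^ k ∂(Measure.map X0 ℙ) := by rw [hid i]
        _ = ∫ ω, X0 ω ^ k := integral_map hX0m.aemeasurable hmk.aestronglyMeasurable
  set m2 : ℝ := ∫ ω, X0 ω ^ 2 with hm2def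
  set m4 : ℝ := ∫ ω, X0 ω ^ 4 with hm4def
  have hm2 : 0 ≤ m2 := integral_nonneg fun ω => sq_nonneg _
  have hm4 : 0 ≤ m4 := integral_nonneg fun ω => by positivity
  -- the weighted variables
  have hZm : ∀ i, Measurable (fun ω => lam i * X i ω) := fun i => (hXm i).const_mul _
  have hindepZ : iIndepFun (fun i ω => lam i * X i ω) ℙ :=
    hindep.comp (fun i x => lam i * x) (fun i => measurable_const_mul _)
  have hintZ : ∀ i, ∀ k, 1 ≤ k → k ≤ 4 →
      Integrable (fun ω => (lam i * X i ω) ^ k) ℙ := by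
    intro i k _ hk4
    have he : (fun ω => (lam i * X i ω) ^ k) = fun ω => lam i ^ k * X i ω ^ k := by
      funext ω; rw [mul_pow]
    rw [he]; exact ((hXk i k hk4).1).const_mul _
  have hX1 : ∀ i, (∫ ω, X i ω) = 0 := by
    intro i
    have := (hXk i 1 (by norm_num)).2
    simpa [hmean] using this
  have hm1Z : ∀ i, (∫ ω, lam i * X i ω) = 0 := by
    intro i; rw [integral_const_mul, hX1 i, mul_zero]
  have hZ2 : ∀ i, (∫ ω, (lam i * X i ω) ^ 2) = lam i ^ 2 * m2 := by
    intro i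
    have he : (fun ω => (lam i * X i ω) ^ 2) = fun ω => lam i ^ 2 * X i ω ^ 2 := by
      funext ω; rw [mul_pow]
    rw [he, integral_const_mul, (hXk i 2 (by norm_num)).2]
  have hZ4 : ∀ i, (∫ ω, (lam i * X i ω) ^ 4) = lam i ^ 4 * m4 := by
    intro i
    have he : (fun ω => (lam i * X i ω) ^ 4) = fun ω => lam i ^ 4 * X i ω ^ 4 := by
      funext ω; rw [mul_pow]
    rw [he, integral_const_mul, (hXk i 4 (by norm_num)).2]
  obtain ⟨hIntY, _, hEY2, hEY4⟩ :=
    aux16 (fun i ω => lam i * X i ω) hZm hindepZ hintZ hm1Z Finset.univ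
  set Y : Ω → ℝ := fun ω => ∑ i, lam i * X i ω with hYdef
  have hYm : Measurable Y := Finset.measurable_sum _ fun i _ => hZm i
  have hIntY2 : Integrable (fun ω => Y ω ^ 2) ℙ := hIntY 2 (by norm_num) (by norm_num)
  have hIntY4 : Integrable (fun ω => Y ω ^ 4) ℙ := hIntY 4 (by norm_num) (by norm_num)
  have hEY2' : (∫ ω, Y ω ^ 2) = m2 := by
    rw [hEY2]
    simp only [hZ2]
    rw [← Finset.sum_mul, hsum, one_mul]
  have hEY4' : (∫ ω, Y ω ^ 4) ≤ m4 + 3 * m2 ^ 2 := by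
    refine hEY4.trans ?_
    simp only [hZ4, hZ2]
    rw [← Finset.sum_mul, ← Finset.sum_mul, hsum, one_mul]
    have h1 : (∑ i, lam i ^ 4) ≤ 1 := by
      rw [← hsum]
      refine Finset.sum_le_sum fun i _ => ?_
      have h0 := (hlam i).1.le
      have h1 := (hlam i).2.le
      exact pow_le_pow_of_le_one h0 h1 (by norm_num)
    have : (∑ i, lam i ^ 4) * m4 ≤ 1 * m4 := mul_le_mul_of_nonneg_right h1 hm4
    nlinarith [mul_pow m2 (1:ℝ) 2]
  have hP1 : ∀ R : ℝ, (∫ ω in {ω | R ≤ |Y ω|}, Y ω ^ 2) ≤ m2 := by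
    intro R
    rw [← hEY2']
    exact setIntegral_le_integral hIntY2 (Filter.Eventually.of_forall fun ω => sq_nonneg _)
  refine ⟨fun R _ => hP1 R, fun R hR => le_min ?_ (hP1 R)⟩
  -- Hölder / Chebyshev part
  set A : Set Ω := {ω | R ≤ |Y ω|} with hAdef
  have hA : MeasurableSet A := measurableSet_le measurable_const hYm.abs
  set g : Ω → ℝ := A.indicator (fun _ => (1:ℝ)) with hgdef
  have hstep1 : (∫ ω in A, Y ω ^ 2) = ∫ ω, Y ω ^ 2 * g ω := by
    rw [← integral_indicator hA]
    congr 1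
    funext ω
    by_cases h : ω ∈ A <;> simp [hgdef, h]
  have hpq : Real.HolderConjugate 2 2 := Real.HolderConjugate.two_two
  have hfM : MemLp (fun ω => Y ω ^ 2) (ENNReal.ofReal 2) ℙ := by
    rw [show ENNReal.ofReal 2 = 2 by simp]
    refine (memLp_two_iff_integrable_sq
      ((hYm.pow_const 2).aestronglyMeasurable)).2 ?_
    have he : (fun ω => (Y ω ^ 2) ^ 2) = fun ω => Y ω ^ 4 := by funext ω; ring
    rw [he]; exact hIntY4
  have hgM : MemLp g (ENNReal.ofReal 2) ℙ := (memLp_const (1:ℝ)).indicator hA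
  have hHolder := integral_mul_le_Lp_mul_Lq_of_nonneg hpq
    (Filter.Eventually.of_forall fun ω => sq_nonneg (Y ω))
    (Filter.Eventually.of_forall fun ω => Set.indicator_nonneg (fun _ _ => zero_le_one) ω)
    hfM hgM
  have hrp : ∀ x : ℝ, x ^ (2:ℝ) = x ^ (2:ℕ) := fun x => by
    rw [show (2:ℝ) = ((2:ℕ):ℝ) by norm_num, Real.rpow_natCast]
  have hInt1 : (∫ ω, (Y ω ^ 2) ^ (2:ℝ)) = ∫ ω, Y ω ^ 4 := by
    congr 1; funext ω; rw [hrp]; ring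
  have hInt2 : (∫ ω, g ω ^ (2:ℝ)) = (ℙ A).toReal := by
    have he : (fun ω => g ω ^ (2:ℝ)) = g := by
      funext ω
      by_cases h : ω ∈ A <;> simp [hgdef, h, hrp]
    rw [he, hgdef, integral_indicator_const (1:ℝ) hA, smul_eq_mul, mul_one, measureReal_def]
  rw [hInt1, hInt2] at hHolder
  -- Chebyshev
  have hAeq : A = {ω | R ^ 2 ≤ Y ω ^ 2} := by
    ext ω
    simp only [hAdef, Set.mem_setOf_eq]
    constructor
    · intro h
      calc R ^ 2 ≤ |Y ω| ^ 2 := pow_le_pow_left₀ hR.le h 2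
        _ = Y ω ^ 2 := sq_abs _
    · intro h
      by_contra hc
      push_neg at hc
      nlinarith [sq_abs (Y ω), abs_nonneg (Y ω)]
  have hCheb : (ℙ A).toReal ≤ m2 / R ^ 2 := by
    have hM := mul_meas_ge_le_integral_of_nonneg
      (Filter.Eventually.of_forall fun ω => sq_nonneg (Y ω)) hIntY2 (R ^ 2)
    rw [hEY2', measureReal_def] at hM
    rw [hAeq]
    rw [le_div_iff₀ (by positivity : (0:ℝ) < R ^ 2)]
    nlinarith [hM]
  have hnn4 : (0:ℝ) ≤ ∫ ω, Y ω ^ 4 := integral_nonneg fun ω => by positivity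
  have hnnA : (0:ℝ) ≤ (ℙ A).toReal := ENNReal.toReal_nonneg
  calc (∫ ω in A, Y ω ^ 2) = ∫ ω, Y ω ^ 2 * g ω := hstep1
    _ ≤ (∫ ω, Y ω ^ 4) ^ (1/2:ℝ) * ((ℙ A).toReal) ^ (1/2:ℝ) := hHolder
    _ = Real.sqrt (∫ ω, Y ω ^ 4) * Real.sqrt ((ℙ A).toReal) := by
        rw [Real.sqrt_eq_rpow, Real.sqrt_eq_rpow]
    _ ≤ Real.sqrt (m4 + 3 * m2 ^ 2) * Real.sqrt (m2 / R ^ 2) := by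
        exact mul_le_mul (Real.sqrt_le_sqrt hEY4') (Real.sqrt_le_sqrt hCheb)
          (Real.sqrt_nonneg _) (Real.sqrt_nonneg _)
    _ = Real.sqrt ((m4 + 3 * m2 ^ 2) * m2) / R := by
        rw [Real.sqrt_div hm2, Real.sqrt_sq hR.le, Real.sqrt_mul (by nlinarith)]
        ring
end

section
/- If ξₙ are i.i.d. copies of ξ with E[ξ] = 0 and E[ξ²] = σ² < ∞, then the sequence {Wₙ²} with Wₙ = (ξ₁+⋯+ξₙ)/√n is uniformly integrable. -/
open MeasureTheory ProbabilityTheory Real Filter Set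

open Topology

set_option linter.unusedSectionVars false
set_option maxHeartbeats 1000000

section Helpers

variable {Ω : Type*} [MeasureSpace Ω] [IsProbabilityMeasure (ℙ : Measure Ω)]

lemma integrable_of_abs_le {f : Ω → ℝ} (hf : Measurable f) {C : ℝ} (h : ∀ ω, |f ω| ≤ C) :
    Integrable f ℙ :=
  (integrable_const C).mono' hf.aestronglyMeasurable
    (Filter.Eventually.of_forall (fun ω => by simpa [Real.norm_eq_abs] using h ω))

lemma indep_pow_mul {X Y : Ω → ℝ} (h : IndepFun X Y ℙ) (hX : Measurable X) (hY : Measurable Y)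
    (a b : ℕ) :
    ∫ ω, X ω ^ a * Y ω ^ b = (∫ ω, X ω ^ a) * ∫ ω, Y ω ^ b := by
  have h2 : IndepFun (fun ω => X ω ^ a) (fun ω => Y ω ^ b) ℙ :=
    h.comp (measurable_id.pow_const a) (measurable_id.pow_const b)
  exact h2.integral_mul_eq_mul_integral (hX.pow_const a).aestronglyMeasurable
    (hY.pow_const b).aestronglyMeasurable

lemma abs_sum_le_card_mul {u : ℕ → Ω → ℝ} {B : ℝ} (hbdd : ∀ i ω, |u i ω| ≤ B) (n : ℕ) (ω : Ω) :
    |∑ i ∈ Finset.range n, u i ω| ≤ n * B := by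
  calc |∑ i ∈ Finset.range n, u i ω| ≤ ∑ i ∈ Finset.range n, |u i ω| :=
        Finset.abs_sum_le_sum_abs _ _
    _ ≤ ∑ _i ∈ Finset.range n, B := Finset.sum_le_sum fun i _ => hbdd i ω
    _ = n * B := by simp [mul_comm]

lemma integrable_pow_of_abs_le {f : Ω → ℝ} (hf : Measurable f) {C : ℝ}
    (h : ∀ ω, |f ω| ≤ C) (k : ℕ) : Integrable (fun ω => f ω ^ k) ℙ :=
  integrable_of_abs_le (hf.pow_const k) (C := C ^ k) fun ω => by
    simpa [abs_pow] using pow_le_pow_left₀ (abs_nonneg _) (h ω) k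

lemma integral_pow_abs_le {f : Ω → ℝ} (hf : Measurable f) {C : ℝ} (hC : 0 ≤ C)
    (h : ∀ ω, |f ω| ≤ C) (k : ℕ) : ∫ ω, f ω ^ k ≤ C ^ k := by
  have : ∀ ω, f ω ^ k ≤ C ^ k := fun ω => by
    calc f ω ^ k ≤ |f ω ^ k| := le_abs_self _
      _ = |f ω| ^ k := abs_pow _ _
      _ ≤ C ^ k := pow_le_pow_left₀ (abs_nonneg _) (h ω) k
  calc ∫ ω, f ω ^ k ≤ ∫ _ω, C ^ k :=
        integral_mono (integrable_pow_of_abs_le hf h k) (integrable_const _) this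
    _ = C ^ k := by simp

lemma sum_moments {u : ℕ → Ω → ℝ} (hm : ∀ i, Measurable (u i))
    (hind : iIndepFun u ℙ)
    {B : ℝ} (hB : 0 ≤ B) (hbdd : ∀ i ω, |u i ω| ≤ B) (hmean : ∀ i, ∫ ω, u i ω = 0) :
    ∀ n : ℕ, (∫ ω, (∑ i ∈ Finset.range n, u i ω) ^ 2 ≤ n * B ^ 2) ∧
      (∫ ω, (∑ i ∈ Finset.range n, u i ω) ^ 4 ≤ 7 * B ^ 4 * n ^ 2) := by
  intro n
  induction n with
  | zero => simp
  | succ n ih =>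
    obtain ⟨ih2, ih4⟩ := ih
    set S : Ω → ℝ := fun ω => ∑ i ∈ Finset.range n, u i ω with hS
    have hSmeas : Measurable S := Finset.measurable_sum _ fun i _ => hm i
    have hSbdd : ∀ ω, |S ω| ≤ n * B := abs_sum_le_card_mul hbdd n
    have hnB : (0:ℝ) ≤ n * B := by positivity
    have hSu : IndepFun S (u n) ℙ := by
      have := hind.indepFun_finsetSum_of_notMem hm (Finset.notMem_range_self (n := n))
      have he : (∑ j ∈ Finset.range n, u j) = S := by ext ω; simp [hS]
      rwa [he] at this
    have hintS : ∀ k, Integrable (fun ω => S ω ^ k) ℙ :=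
      integrable_pow_of_abs_le hSmeas hSbdd
    have hintu : ∀ k, Integrable (fun ω => u n ω ^ k) ℙ :=
      integrable_pow_of_abs_le (hm n) (hbdd n)
    have hcross : ∀ a b : ℕ, ∫ ω, S ω ^ a * u n ω ^ b =
        (∫ ω, S ω ^ a) * ∫ ω, u n ω ^ b := fun a b =>
      indep_pow_mul hSu hSmeas (hm n) a b
    have hintcross : ∀ a b : ℕ, Integrable (fun ω => S ω ^ a * u n ω ^ b) ℙ := by
      intro a b
      exact integrable_of_abs_le ((hSmeas.pow_const a).mul ((hm n).pow_const b))
        (C := (n*B)^a * B^b) fun ω => by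
          rw [abs_mul, abs_pow, abs_pow]
          exact mul_le_mul (pow_le_pow_left₀ (abs_nonneg _) (hSbdd ω) a)
            (pow_le_pow_left₀ (abs_nonneg _) (hbdd n ω) b)
            (by positivity) (by positivity)
    have hmean_u : ∫ ω, u n ω = 0 := hmean n
    have hmean_u1 : ∫ ω, u n ω ^ 1 = 0 := by simpa using hmean n
    have hSsucc : ∀ ω, ∑ i ∈ Finset.range (n+1), u i ω = S ω + u n ω := fun ω => by
      simp [hS, Finset.sum_range_succ]
    have hu2 : ∫ ω, u n ω ^ 2 ≤ B ^ 2 := integral_pow_abs_le (hm n) hB (hbdd n) 2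
    have hu4 : ∫ ω, u n ω ^ 4 ≤ B ^ 4 := integral_pow_abs_le (hm n) hB (hbdd n) 4
    have hS2nonneg : 0 ≤ ∫ ω, S ω ^ 2 := integral_nonneg fun ω => sq_nonneg _
    have hu2nonneg : 0 ≤ ∫ ω, u n ω ^ 2 := integral_nonneg fun ω => sq_nonneg _
    have hSmean : ∫ ω, S ω ^ 1 = 0 := by
      simp only [pow_one, hS]
      rw [integral_finset_sum _ (fun i _ => integrable_of_abs_le (hm i) (hbdd i))]
      simp [hmean]
    constructor
    · have expand : ∫ ω, (∑ i ∈ Finset.range (n+1), u i ω) ^ 2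
          = ∫ ω, (S ω ^ 2 + (2 * (S ω ^ 1 * u n ω ^ 1) + u n ω ^ 2)) := by
        congr 1; ext ω; rw [hSsucc ω]; ring
      have j1 : Integrable (fun ω => 2 * (S ω ^ 1 * u n ω ^ 1) + u n ω ^ 2) ℙ :=
        ((hintcross 1 1).const_mul 2).add (hintu 2)
      rw [expand, integral_add (hintS 2) j1, integral_add ((hintcross 1 1).const_mul 2) (hintu 2),
        integral_const_mul, hcross 1 1, hmean_u1]
      simp only [mul_zero, zero_mul, zero_add, add_zero]
      push_cast
      nlinarith [hu2, ih2]
    · have expand : ∫ ω, (∑ i ∈ Finset.range (n+1), u i ω) ^ 4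
          = ∫ ω, (S ω ^ 4 + (4 * (S ω ^ 3 * u n ω ^ 1) + (6 * (S ω ^ 2 * u n ω ^ 2)
              + (4 * (S ω ^ 1 * u n ω ^ 3) + u n ω ^ 4)))) := by
        congr 1; ext ω; rw [hSsucc ω]; ring
      have i1 : Integrable (fun ω => 4 * (S ω ^ 1 * u n ω ^ 3) + u n ω ^ 4) ℙ :=
        ((hintcross 1 3).const_mul 4).add (hintu 4)
      have i2 : Integrable (fun ω => 6 * (S ω ^ 2 * u n ω ^ 2)
          + (4 * (S ω ^ 1 * u n ω ^ 3) + u n ω ^ 4)) ℙ :=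
        ((hintcross 2 2).const_mul 6).add i1
      have i3 : Integrable (fun ω => 4 * (S ω ^ 3 * u n ω ^ 1) + (6 * (S ω ^ 2 * u n ω ^ 2)
          + (4 * (S ω ^ 1 * u n ω ^ 3) + u n ω ^ 4))) ℙ :=
        ((hintcross 3 1).const_mul 4).add i2
      rw [expand, integral_add (hintS 4) i3, integral_add ((hintcross 3 1).const_mul 4) i2,
        integral_add ((hintcross 2 2).const_mul 6) i1,
        integral_add ((hintcross 1 3).const_mul 4) (hintu 4),
        integral_const_mul, integral_const_mul, integral_const_mul,
        hcross 3 1, hcross 2 2, hcross 1 3, hmean_u1, hSmean]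
      simp only [mul_zero, zero_mul, zero_add, add_zero]
      have hprod : (∫ ω, S ω ^ 2) * ∫ ω, u n ω ^ 2 ≤ (n * B ^ 2) * B ^ 2 :=
        mul_le_mul ih2 hu2 hu2nonneg (by positivity)
      have hS4 : ∫ ω, S ω ^ 4 ≤ 7 * B ^ 4 * (n:ℝ) ^ 2 := ih4
      push_cast
      nlinarith [hu4, hS4, hprod, Nat.cast_nonneg (α := ℝ) n, sq_nonneg B]

end Helpers

/-- for i.i.d. mean-zero `ξᵢ` with `E[ξ²] = σ² < ∞`, the sequence
`Wₙ² = ((ξ₁ + ⋯ + ξₙ)/√n)²` is uniformly integrable. -/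
theorem stmt17 {Ω : Type*} [MeasureSpace Ω] [IsProbabilityMeasure (ℙ : Measure Ω)]
    (ξ : ℕ → Ω → ℝ) (ξ0 : Ω → ℝ)
    (hξm : ∀ i, Measurable (ξ i)) (hξ0m : Measurable ξ0)
    (hindep : iIndepFun ξ ℙ)
    (hid : ∀ i, Measure.map (ξ i) ℙ = Measure.map ξ0 ℙ)
    (hmean : ∫ ω, ξ0 ω = 0)
    (hL2 : Integrable (fun ω => (ξ0 ω) ^ 2))
    (σ : ℝ) (hσ : ∫ ω, (ξ0 ω) ^ 2 = σ ^ 2) :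
    ∀ ε : ℝ, 0 < ε → ∃ K : ℝ, ∀ n : ℕ, 1 ≤ n →
      (∫ ω in {ω | K ≤ ((∑ i ∈ Finset.range n, ξ i ω) / Real.sqrt n) ^ 2},
          ((∑ i ∈ Finset.range n, ξ i ω) / Real.sqrt n) ^ 2) ≤ ε := by
  intro ε hε
  -- transfer of moments along identical distribution
  have key : ∀ (φ : ℝ → ℝ), Measurable φ → ∀ i, ∫ ω, φ (ξ i ω) = ∫ ω, φ (ξ0 ω) := by
    intro φ hφ i
    rw [← integral_map (hξm i).aemeasurable hφ.aestronglyMeasurable, hid i,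
      integral_map hξ0m.aemeasurable hφ.aestronglyMeasurable]
  have keyI : ∀ (φ : ℝ → ℝ), Measurable φ → ∀ i,
      (Integrable (fun ω => φ (ξ i ω)) ℙ ↔ Integrable (fun ω => φ (ξ0 ω)) ℙ) := by
    intro φ hφ i
    have h1 := integrable_map_measure (μ := ℙ) (f := ξ i) (g := φ)
      hφ.aestronglyMeasurable (hξm i).aemeasurable
    have h2 := integrable_map_measure (μ := ℙ) (f := ξ0) (g := φ)
      hφ.aestronglyMeasurable hξ0m.aemeasurable
    rw [hid i] at h1
    exact h1.symm.trans h2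
  have hMem0 : MemLp ξ0 2 ℙ := (memLp_two_iff_integrable_sq hξ0m.aestronglyMeasurable).mpr hL2
  have hMem : ∀ i, MemLp (ξ i) 2 ℙ := by
    intro i
    rw [memLp_two_iff_integrable_sq (hξm i).aestronglyMeasurable]
    exact (keyI (fun x => x ^ 2) (measurable_id.pow_const 2) i).mpr hL2
  have hmean_i : ∀ i, ∫ ω, ξ i ω = 0 := fun i => by
    simpa using (key id measurable_id i).trans hmean
  have hvar : ∀ i, variance (ξ i) ℙ = σ ^ 2 := by
    intro i
    rw [variance_eq_sub (hMem i)]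
    have h1 : (∫ ω, (ξ i ω) ^ 2) = σ ^ 2 :=
      (key (fun x => x ^ 2) (measurable_id.pow_const 2) i).trans hσ
    have h2 := hmean_i i
    simp only [Pi.pow_apply]
    rw [h1, h2]
    ring
  -- choice of truncation level
  obtain ⟨m, hδ⟩ : ∃ m : ℕ, (∫ ω, (if |ξ0 ω| ≤ (m:ℝ) then (0:ℝ) else ξ0 ω ^ 2)) ≤ ε/8 := by
    have htend : Tendsto (fun m : ℕ => ∫ ω, (if |ξ0 ω| ≤ (m:ℝ) then (0:ℝ) else ξ0 ω ^ 2))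
        atTop (𝓝 0) := by
      have h0 : (0:ℝ) = ∫ (_ω : Ω), (0:ℝ) := by simp
      rw [h0]
      apply tendsto_integral_of_dominated_convergence (fun ω => ξ0 ω ^ 2)
      · intro n
        exact (Measurable.ite (measurableSet_le hξ0m.abs measurable_const)
          measurable_const (hξ0m.pow_const 2)).aestronglyMeasurable
      · exact hL2
      · intro n
        filter_upwards with ω
        by_cases h : |ξ0 ω| ≤ (n:ℝ) <;> simp [h, abs_of_nonneg (sq_nonneg (ξ0 ω)), sq_nonneg]
      · filter_upwards with ω
        apply tendsto_atTop_of_eventually_const (i₀ := ⌈|ξ0 ω|⌉₊)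
        intro i hi
        have : |ξ0 ω| ≤ (i:ℝ) := (Nat.le_ceil _).trans (by exact_mod_cast hi)
        simp [this]
    exact (htend.eventually_le_const (by positivity : (0:ℝ) < ε/8)).exists
  set M : ℝ := (m : ℝ) with hM
  have hM0 : 0 ≤ M := Nat.cast_nonneg m
  set g : ℝ → ℝ := fun x => if |x| ≤ M then x else 0 with hg
  have hgmeas : Measurable g :=
    Measurable.ite (measurableSet_le measurable_abs measurable_const)
      measurable_id measurable_const
  have hgbdd : ∀ x, |g x| ≤ M := by
    intro x
    by_cases h : |x| ≤ M
    · simpa [hg, h] using h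
    · simp [hg, h, hM0]
  set μM : ℝ := ∫ ω, g (ξ0 ω) with hμM
  have hgint : ∀ i, Integrable (fun ω => g (ξ i ω)) ℙ := fun i =>
    integrable_of_abs_le (hgmeas.comp (hξm i)) (fun ω => hgbdd _)
  have hgint0 : Integrable (fun ω => g (ξ0 ω)) ℙ :=
    integrable_of_abs_le (hgmeas.comp hξ0m) (fun ω => hgbdd _)
  have hμMabs : |μM| ≤ M := by
    have := norm_integral_le_of_norm_le_const (μ := ℙ) (C := M)
      (f := fun ω => g (ξ0 ω)) (Filter.Eventually.of_forall fun ω => by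
        simpa [Real.norm_eq_abs] using hgbdd (ξ0 ω))
    simpa [Real.norm_eq_abs, hμM] using this
  set φu : ℝ → ℝ := fun x => g x - μM with hφu
  have hφumeas : Measurable φu := hgmeas.sub measurable_const
  set u : ℕ → Ω → ℝ := fun i ω => φu (ξ i ω) with hu
  have humeas : ∀ i, Measurable (u i) := fun i => hφumeas.comp (hξm i)
  set B : ℝ := 2 * M with hB
  have hB0 : 0 ≤ B := by positivity
  have hubdd : ∀ i ω, |u i ω| ≤ B := by
    intro i ω
    calc |u i ω| = |g (ξ i ω) - μM| := rfl
      _ ≤ |g (ξ i ω)| + |μM| := abs_sub _ _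
      _ ≤ M + M := add_le_add (hgbdd _) hμMabs
      _ = B := by rw [hB]; ring
  have humean : ∀ i, ∫ ω, u i ω = 0 := by
    intro i
    have h1 : ∫ ω, u i ω = ∫ ω, φu (ξ0 ω) := key φu hφumeas i
    rw [h1, hφu]
    simp only
    rw [integral_sub hgint0 (integrable_const μM)]
    simp [hμM]
  have huind : iIndepFun u ℙ :=
    hindep.comp (fun _ => φu) (fun _ => hφumeas)
  have humem : ∀ i, MemLp (u i) 2 ℙ := by
    intro i
    rw [memLp_two_iff_integrable_sq (humeas i).aestronglyMeasurable]
    exact integrable_pow_of_abs_le (humeas i) (hubdd i) 2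
  -- the complementary part v
  set v : ℕ → Ω → ℝ := fun i ω => ξ i ω - u i ω with hv
  set φv : ℝ → ℝ := fun x => (x - g x) + μM with hφv
  have hφvmeas : Measurable φv := (measurable_id.sub hgmeas).add measurable_const
  have hvφ : v = fun i ω => φv (ξ i ω) := by
    ext i ω
    simp only [hv, hu, hφu, hφv]
    ring
  have hvmeas : ∀ i, Measurable (v i) := fun i => (hξm i).sub (humeas i)
  have hvind : iIndepFun v ℙ := by
    rw [hvφ]
    exact hindep.comp (fun _ => φv) (fun _ => hφvmeas)
  have hvmem : ∀ i, MemLp (v i) 2 ℙ := fun i => (hMem i).sub (humem i)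
  have hvmean : ∀ i, ∫ ω, v i ω = 0 := by
    intro i
    rw [hv]
    simp only
    rw [integral_sub ((hMem i).integrable one_le_two) (integrable_of_abs_le (humeas i) (hubdd i))]
    rw [hmean_i i, humean i, sub_zero]
  -- the variance of each v i is at most ε/8
  have hξ0int : Integrable ξ0 ℙ := hMem0.integrable one_le_two
  have hhint : Integrable (fun ω => ξ0 ω - g (ξ0 ω)) ℙ := hξ0int.sub hgint0
  have hhmean : ∫ ω, (ξ0 ω - g (ξ0 ω)) = -μM := by
    rw [integral_sub hξ0int hgint0, hmean, hμM]
    ring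
  have hhsq : ∀ x : ℝ, (x - g x) ^ 2 = (if |x| ≤ M then (0:ℝ) else x ^ 2) := by
    intro x
    by_cases h : |x| ≤ M <;> simp [hg, h]
  have hhsqint : Integrable (fun ω => (ξ0 ω - g (ξ0 ω)) ^ 2) ℙ := by
    apply hL2.mono' (((hξ0m.sub (hgmeas.comp hξ0m)).pow_const 2).aestronglyMeasurable)
    filter_upwards with ω
    show ‖(ξ0 ω - g (ξ0 ω)) ^ 2‖ ≤ ξ0 ω ^ 2
    rw [Real.norm_eq_abs, abs_of_nonneg (sq_nonneg _), hhsq]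
    by_cases h : |ξ0 ω| ≤ M <;> simp [h, sq_nonneg]
  have hvvarbound : ∀ i, variance (v i) ℙ ≤ ε / 8 := by
    intro i
    rw [variance_eq_sub (hvmem i)]
    have e1 : ℙ[(v i) ^ 2] = ∫ ω, φv (ξ0 ω) ^ 2 := by
      have : ℙ[(v i) ^ 2] = ∫ ω, φv (ξ i ω) ^ 2 := by
        congr 1
        ext ω
        simp [Pi.pow_apply, hvφ]
      rw [this]
      exact key (fun x => φv x ^ 2) (hφvmeas.pow_const 2) i
    have e2 : ℙ[v i] = 0 := hvmean i
    rw [e1, e2]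
    have expand : ∀ ω, φv (ξ0 ω) ^ 2
        = (ξ0 ω - g (ξ0 ω)) ^ 2 + (2 * μM * (ξ0 ω - g (ξ0 ω)) + μM ^ 2) := by
      intro ω
      simp only [hφv]
      ring
    have e3 : ∫ ω, φv (ξ0 ω) ^ 2
        = (∫ ω, (ξ0 ω - g (ξ0 ω)) ^ 2) + (2 * μM * (-μM) + μM ^ 2) := by
      have j1 : Integrable (fun ω => 2 * μM * (ξ0 ω - g (ξ0 ω)) + μM ^ 2) ℙ :=
        (hhint.const_mul (2 * μM)).add (integrable_const (μM ^ 2))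
      rw [integral_congr_ae (Filter.Eventually.of_forall expand),
        integral_add hhsqint j1,
        integral_add (hhint.const_mul (2 * μM)) (integrable_const (μM ^ 2)),
        integral_const_mul, hhmean]
      simp
    rw [e3]
    have : (∫ ω, (ξ0 ω - g (ξ0 ω)) ^ 2) ≤ ε / 8 := by
      calc (∫ ω, (ξ0 ω - g (ξ0 ω)) ^ 2)
          = ∫ ω, (if |ξ0 ω| ≤ M then (0:ℝ) else ξ0 ω ^ 2) := by
            congr 1; ext ω; exact hhsq (ξ0 ω)
        _ ≤ ε / 8 := hδ
    nlinarith [sq_nonneg μM]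
  -- constants
  obtain ⟨C, hC⟩ : ∃ c : ℝ, c = 7 * B ^ 4 := ⟨_, rfl⟩
  have hC0 : 0 ≤ C := by rw [hC]; positivity
  obtain ⟨L, hL⟩ : ∃ l : ℝ, l = 8 * C / ε + 1 := ⟨_, rfl⟩
  have hL0 : 0 < L := by rw [hL]; positivity
  obtain ⟨K, hK⟩ : ∃ k : ℝ, k = 8 * L * σ ^ 2 / ε + 1 := ⟨_, rfl⟩
  have hK0 : 0 < K := by rw [hK]; positivity
  have hLbound : 8 * C ≤ ε * L := by
    rw [hL]
    have e : ε * (8 * C / ε + 1) = 8 * C + ε := by field_simp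
    rw [e]; linarith
  have hKbound : 8 * L * σ ^ 2 ≤ ε * K := by
    rw [hK]
    have e : ε * (8 * L * σ ^ 2 / ε + 1) = 8 * L * σ ^ 2 + ε := by field_simp
    rw [e]; linarith
  refine ⟨K, ?_⟩
  intro n hn
  have hn0 : (0:ℝ) < n := by exact_mod_cast hn
  have hsq : Real.sqrt n ^ 2 = (n:ℝ) := Real.sq_sqrt hn0.le
  have hsqpos : 0 < Real.sqrt n := Real.sqrt_pos.mpr hn0
  set Sξ : Ω → ℝ := fun ω => ∑ i ∈ Finset.range n, ξ i ω with hSξ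
  set Su : Ω → ℝ := fun ω => ∑ i ∈ Finset.range n, u i ω with hSu
  set Sv : Ω → ℝ := fun ω => ∑ i ∈ Finset.range n, v i ω with hSv
  have hSsplit : ∀ ω, Sξ ω = Su ω + Sv ω := by
    intro ω
    rw [hSξ, hSu, hSv]
    simp only [hv, ← Finset.sum_add_distrib]
    apply Finset.sum_congr rfl
    intros
    ring
  have hSmeas : Measurable Sξ := Finset.measurable_sum _ fun i _ => hξm i
  have hSumeas : Measurable Su := Finset.measurable_sum _ fun i _ => humeas i
  have hSvmeas : Measurable Sv := Finset.measurable_sum _ fun i _ => hvmeas i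
  set A : Set Ω := {ω | K ≤ (Sξ ω / Real.sqrt n) ^ 2} with hA
  have hAmeas : MeasurableSet A :=
    measurableSet_le measurable_const ((hSmeas.div_const _).pow_const 2)
  -- Chebyshev for the full sum
  have hfun_eq : Sξ = (∑ i ∈ Finset.range n, ξ i) := by ext ω; simp [hSξ]
  have hSMem : MemLp Sξ 2 ℙ := by
    rw [hfun_eq]; exact memLp_finsetSum' _ fun i _ => hMem i
  have hpairξ : Set.Pairwise ↑(Finset.range n) fun i j => IndepFun (ξ i) (ξ j) ℙ :=
    fun i _ j _ hij => hindep.indepFun hij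
  have hvarSξ : variance Sξ ℙ = n * σ ^ 2 := by
    rw [hfun_eq, IndepFun.variance_sum (fun i _ => hMem i) hpairξ]
    simp [hvar, mul_comm]
  have hmeanSξ : ∫ ω, Sξ ω = 0 := by
    rw [hSξ]
    simp only
    rw [integral_finset_sum _ (fun i _ => (hMem i).integrable one_le_two)]
    simp [hmean_i]
  have hseteq : A = {ω | Real.sqrt ((n:ℝ) * K) ≤ |Sξ ω - ∫ ω', Sξ ω'|} := by
    ext ω
    simp only [hA, Set.mem_setOf_eq, hmeanSξ, sub_zero]
    rw [div_pow, hsq]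
    constructor
    · intro h
      have h2 : (n:ℝ) * K ≤ Sξ ω ^ 2 := by
        have := (le_div_iff₀ hn0).mp h
        nlinarith
      have h3 := Real.sqrt_le_sqrt h2
      rwa [Real.sqrt_sq_eq_abs] at h3
    · intro h
      have h2 := pow_le_pow_left₀ (Real.sqrt_nonneg _) h 2
      rw [Real.sq_sqrt (by positivity), sq_abs] at h2
      rw [le_div_iff₀ hn0]
      nlinarith
  have hcheb : (ℙ A).toReal ≤ σ ^ 2 / K := by
    have hc : 0 < Real.sqrt ((n:ℝ) * K) := Real.sqrt_pos.mpr (by positivity)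
    have h := meas_ge_le_variance_div_sq (μ := ℙ) hSMem hc
    rw [← hseteq, hvarSξ, Real.sq_sqrt (by positivity : (0:ℝ) ≤ (n:ℝ) * K)] at h
    have e : (n:ℝ) * σ ^ 2 / ((n:ℝ) * K) = σ ^ 2 / K := by
      rw [mul_div_mul_left _ _ hn0.ne']
    rw [e] at h
    exact ENNReal.toReal_le_of_le_ofReal (by positivity) h
  -- moment bounds for the truncated part
  obtain ⟨hU2, hU4⟩ := sum_moments humeas huind hB0 hubdd humean n
  -- second moment of the tail part
  have hfun_eqv : Sv = (∑ i ∈ Finset.range n, v i) := by ext ω; simp [hSv]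
  have hSvMem : MemLp Sv 2 ℙ := by
    rw [hfun_eqv]; exact memLp_finsetSum' _ fun i _ => hvmem i
  have hSvmean : ∫ ω, Sv ω = 0 := by
    rw [hSv]
    simp only
    rw [integral_finset_sum _ (fun i _ => (hvmem i).integrable one_le_two)]
    simp [hvmean]
  have hSvvar : variance Sv ℙ ≤ n * (ε/8) := by
    rw [hfun_eqv, IndepFun.variance_sum (fun i _ => hvmem i)
      (fun i _ j _ hij => hvind.indepFun hij)]
    calc ∑ i ∈ Finset.range n, variance (v i) ℙ ≤ ∑ _i ∈ Finset.range n, (ε/8) :=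
          Finset.sum_le_sum fun i _ => hvvarbound i
      _ = n * (ε/8) := by simp [mul_comm]
  have hSv2 : ∫ ω, Sv ω ^ 2 ≤ n * (ε/8) := by
    have e1 : ℙ[Sv ^ 2] = ∫ ω, Sv ω ^ 2 := by congr 1
    have := variance_eq_sub hSvMem
    rw [e1] at this
    have e2 : ℙ[Sv] = 0 := hSvmean
    rw [e2] at this
    nlinarith [hSvvar]
  -- integrability of the scaled quantities
  have hWmem : MemLp (fun ω => Sξ ω / Real.sqrt n) 2 ℙ := by
    have h2 : (fun ω => Sξ ω / Real.sqrt n) = fun ω => (Real.sqrt n)⁻¹ * Sξ ω := by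
      ext ω; rw [div_eq_inv_mul]
    rw [h2]; exact hSMem.const_mul _
  have hW2int : Integrable (fun ω => (Sξ ω / Real.sqrt n) ^ 2) ℙ :=
    (memLp_two_iff_integrable_sq hWmem.aestronglyMeasurable).mp hWmem
  have hVmem : MemLp (fun ω => Sv ω / Real.sqrt n) 2 ℙ := by
    have h2 : (fun ω => Sv ω / Real.sqrt n) = fun ω => (Real.sqrt n)⁻¹ * Sv ω := by
      ext ω; rw [div_eq_inv_mul]
    rw [h2]; exact hSvMem.const_mul _
  have hV2int : Integrable (fun ω => (Sv ω / Real.sqrt n) ^ 2) ℙ :=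
    (memLp_two_iff_integrable_sq hVmem.aestronglyMeasurable).mp hVmem
  have hUbdd : ∀ ω, |Su ω / Real.sqrt n| ≤ (n * B) / Real.sqrt n := by
    intro ω
    rw [abs_div, abs_of_pos hsqpos]
    gcongr
    exact abs_sum_le_card_mul hubdd n ω
  have hU2int : Integrable (fun ω => (Su ω / Real.sqrt n) ^ 2) ℙ :=
    integrable_pow_of_abs_le (hSumeas.div_const _) hUbdd 2
  have hU4int : Integrable (fun ω => (Su ω / Real.sqrt n) ^ 4) ℙ :=
    integrable_pow_of_abs_le (hSumeas.div_const _) hUbdd 4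
  -- integral bounds for scaled quantities
  have hsq4 : Real.sqrt n ^ 4 = (n:ℝ) ^ 2 := by
    rw [show (4:ℕ) = 2 * 2 from rfl, pow_mul, hsq]
  have hU4' : ∫ ω, (Su ω / Real.sqrt n) ^ 4 ≤ C := by
    have e : (fun ω => (Su ω / Real.sqrt n) ^ 4)
        = fun ω => Su ω ^ 4 * (((n:ℝ) ^ 2)⁻¹) := by
      ext ω; rw [div_pow, hsq4, div_eq_mul_inv]
    rw [e, integral_mul_const]
    calc (∫ ω, Su ω ^ 4) * (((n:ℝ) ^ 2)⁻¹) ≤ (7 * B ^ 4 * n ^ 2) * (((n:ℝ) ^ 2)⁻¹) := by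
          apply mul_le_mul_of_nonneg_right hU4 (by positivity)
      _ = C := by
          rw [hC]
          field_simp
  have hV2' : ∫ ω, (Sv ω / Real.sqrt n) ^ 2 ≤ ε/8 := by
    have e : (fun ω => (Sv ω / Real.sqrt n) ^ 2)
        = fun ω => Sv ω ^ 2 * (((n:ℝ))⁻¹) := by
      ext ω; rw [div_pow, hsq, div_eq_mul_inv]
    rw [e, integral_mul_const]
    calc (∫ ω, Sv ω ^ 2) * ((n:ℝ))⁻¹ ≤ ((n:ℝ) * (ε/8)) * ((n:ℝ))⁻¹ := by
          apply mul_le_mul_of_nonneg_right hSv2 (by positivity)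
      _ = ε/8 := by field_simp
  -- pointwise domination
  have hWUV : ∀ ω, (Sξ ω / Real.sqrt n) ^ 2
      ≤ 2*(Su ω / Real.sqrt n) ^ 2 + 2*(Sv ω / Real.sqrt n) ^ 2 := by
    intro ω
    rw [hSsplit ω, add_div]
    nlinarith [sq_nonneg (Su ω / Real.sqrt n - Sv ω / Real.sqrt n)]
  -- set-integral chain
  have step1 : ∫ ω in A, (Sξ ω / Real.sqrt n) ^ 2
      ≤ ∫ ω in A, (2*(Su ω / Real.sqrt n) ^ 2 + 2*(Sv ω / Real.sqrt n) ^ 2) :=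
    setIntegral_mono_on hW2int.integrableOn
      (((hU2int.const_mul 2).add (hV2int.const_mul 2)).integrableOn) hAmeas
      (fun ω _ => hWUV ω)
  have step2 : ∫ ω in A, (2*(Su ω / Real.sqrt n) ^ 2 + 2*(Sv ω / Real.sqrt n) ^ 2)
      = 2 * (∫ ω in A, (Su ω / Real.sqrt n) ^ 2) + 2 * ∫ ω in A, (Sv ω / Real.sqrt n) ^ 2 := by
    rw [integral_add ((hU2int.const_mul 2).integrableOn) ((hV2int.const_mul 2).integrableOn),
      integral_const_mul, integral_const_mul]
  have step3 : ∫ ω in A, (Sv ω / Real.sqrt n) ^ 2 ≤ ε/8 :=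
    (setIntegral_le_integral hV2int (Filter.Eventually.of_forall fun ω => sq_nonneg _)).trans hV2'
  have ptwise : ∀ t : ℝ, t ^ 2 ≤ t ^ 4 / L + L := by
    intro t
    rcases le_or_gt (t ^ 2) L with h | h
    · have h4 : 0 ≤ t ^ 4 / L := by positivity
      exact h.trans (le_add_of_nonneg_left h4)
    · have h4 : t ^ 2 ≤ t ^ 4 / L := by
        rw [le_div_iff₀ hL0]
        nlinarith [sq_nonneg t, h.le]
      exact h4.trans (le_add_of_nonneg_right hL0.le)
  have step5 : ∫ ω in A, (Su ω / Real.sqrt n) ^ 2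
      ≤ ∫ ω in A, ((Su ω / Real.sqrt n) ^ 4 / L + L) :=
    setIntegral_mono_on hU2int.integrableOn
      (((hU4int.div_const L).add (integrable_const L)).integrableOn) hAmeas
      (fun ω _ => ptwise _)
  have step6 : ∫ ω in A, ((Su ω / Real.sqrt n) ^ 4 / L + L)
      = (∫ ω in A, (Su ω / Real.sqrt n) ^ 4) / L + L * (ℙ A).toReal := by
    rw [integral_add ((hU4int.div_const L).integrableOn)
        (integrable_const L).integrableOn,
      integral_div, setIntegral_const, smul_eq_mul, mul_comm, Measure.real]
  have step7 : (∫ ω in A, (Su ω / Real.sqrt n) ^ 4) ≤ C :=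
    (setIntegral_le_integral hU4int (Filter.Eventually.of_forall fun ω => by positivity)).trans hU4'
  -- final numeric assembly
  have hCL : (∫ ω in A, (Su ω / Real.sqrt n) ^ 4) / L ≤ ε / 8 := by
    have h1 : (∫ ω in A, (Su ω / Real.sqrt n) ^ 4) / L ≤ C / L := by gcongr
    have h2 : C / L ≤ ε / 8 := by
      rw [div_le_iff₀ hL0]
      linarith only [hLbound]
    linarith only [h1, h2]
  have hLp : L * (ℙ A).toReal ≤ ε / 8 := by
    have h1 : L * (ℙ A).toReal ≤ L * (σ ^ 2 / K) :=
      mul_le_mul_of_nonneg_left hcheb hL0.le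
    have h2 : L * (σ ^ 2 / K) ≤ ε / 8 := by
      rw [← mul_div_assoc, div_le_iff₀ hK0]
      linarith only [hKbound]
    linarith only [h1, h2]
  have stepU : ∫ ω in A, (Su ω / Real.sqrt n) ^ 2 ≤ ε/8 + ε/8 := by
    calc ∫ ω in A, (Su ω / Real.sqrt n) ^ 2
        ≤ (∫ ω in A, (Su ω / Real.sqrt n) ^ 4) / L + L * (ℙ A).toReal := step5.trans_eq step6
      _ ≤ ε/8 + ε/8 := add_le_add hCL hLp
  show ∫ ω in A, (Sξ ω / Real.sqrt n) ^ 2 ≤ ε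
  calc ∫ ω in A, (Sξ ω / Real.sqrt n) ^ 2
      ≤ 2 * (∫ ω in A, (Su ω / Real.sqrt n) ^ 2) + 2 * ∫ ω in A, (Sv ω / Real.sqrt n) ^ 2 :=
        step1.trans_eq step2
    _ ≤ 2 * (ε/8 + ε/8) + 2 * (ε/8) := by
        apply add_le_add
        · exact mul_le_mul_of_nonneg_left stepU (by norm_num)
        · exact mul_le_mul_of_nonneg_left step3 (by norm_num)
    _ ≤ ε := by linarith only [hε.le]
end

section
/- Let X = X₀ + G_a with E[X₀]=0, G_a ∼ N(0,a) independent of X₀, 0 < a < 1, and tail variance L_X ≤ l for a decreasing l with l(R)→0. Then the tail variance of X₀ satisfies L_{X₀}(2R)·(1 − a²/R²) ≤ l(R) for all R > a, i.e., the tail variance of X₀ is uniformly controlled by that of X. -/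
open MeasureTheory ProbabilityTheory Real Filter Set
open scoped NNReal ENNReal

lemma gaussAux_sq_int {a : ℝ≥0} (ha : a ≠ 0) :
    Integrable (fun x : ℝ => x ^ 2) (gaussianReal 0 a) := by
  have ha' : (0:ℝ) < (a:ℝ) := by exact_mod_cast pos_iff_ne_zero.mpr ha
  rw [gaussianReal_of_var_ne_zero 0 ha,
    integrable_withDensity_iff (measurable_gaussianPDF 0 a)
      (ae_of_all _ fun _ => ENNReal.ofReal_lt_top)]
  have hc : (0:ℝ) ≤ (Real.sqrt (2 * π * a))⁻¹ := by positivity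
  refine Integrable.mono'
    (g := fun x => (Real.sqrt (2 * π * a))⁻¹ * ((4*a) * rexp (-(4*(a:ℝ))⁻¹ * x^2)))
    (((integrable_exp_neg_mul_sq (by positivity : (0:ℝ) < (4*(a:ℝ))⁻¹)).const_mul _).const_mul _)
    (((measurable_id.pow_const 2).mul
      ((measurable_gaussianPDF 0 a).ennreal_toReal)).aestronglyMeasurable)
    (ae_of_all _ fun x => ?_)
  have hpdf : (gaussianPDF 0 a x).toReal
      = (Real.sqrt (2 * π * a))⁻¹ * rexp (-(x^2) / (2*(a:ℝ))) := by
    rw [gaussianPDF, ENNReal.toReal_ofReal (gaussianPDFReal_nonneg 0 a x), gaussianPDFReal]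
    norm_num
  rw [Real.norm_eq_abs, abs_of_nonneg (by rw [hpdf]; positivity), hpdf]
  have hsplit : rexp (-(x^2) / (2*(a:ℝ)))
      = rexp (-(4*(a:ℝ))⁻¹ * x^2) * rexp (-(4*(a:ℝ))⁻¹ * x^2) := by
    rw [← Real.exp_add]
    congr 1
    field_simp
    ring
  have ht : (4*(a:ℝ))⁻¹ * x^2 ≤ rexp ((4*(a:ℝ))⁻¹ * x^2) :=
    le_trans (by linarith [Real.add_one_le_exp ((4*(a:ℝ))⁻¹ * x^2)]) le_rfl
  have h1 : x^2 * rexp (-(4*(a:ℝ))⁻¹ * x^2) ≤ 4*(a:ℝ) := by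
    have hx2 : x^2 = (4*(a:ℝ)) * ((4*(a:ℝ))⁻¹ * x^2) := by field_simp
    have hepos : 0 < rexp (-(4*(a:ℝ))⁻¹ * x^2) := Real.exp_pos _
    have hee : rexp ((4*(a:ℝ))⁻¹ * x^2) * rexp (-(4*(a:ℝ))⁻¹ * x^2) = 1 := by
      rw [← Real.exp_add]; simp
    calc x^2 * rexp (-(4*(a:ℝ))⁻¹ * x^2)
        = (4*(a:ℝ)) * (((4*(a:ℝ))⁻¹ * x^2) * rexp (-(4*(a:ℝ))⁻¹ * x^2)) := by
          nlinarith [ha']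
      _ ≤ (4*(a:ℝ)) * (rexp ((4*(a:ℝ))⁻¹ * x^2) * rexp (-(4*(a:ℝ))⁻¹ * x^2)) := by
          have hmul := mul_le_mul_of_nonneg_right ht hepos.le
          nlinarith
      _ = 4*(a:ℝ) := by rw [hee, mul_one]
  calc x ^ 2 * ((Real.sqrt (2 * π * a))⁻¹ * rexp (-(x^2) / (2*(a:ℝ))))
      = (Real.sqrt (2 * π * a))⁻¹ *
        ((x^2 * rexp (-(4*(a:ℝ))⁻¹ * x^2)) * rexp (-(4*(a:ℝ))⁻¹ * x^2)) := by
        rw [hsplit]; ring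
    _ ≤ (Real.sqrt (2 * π * a))⁻¹ * ((4*(a:ℝ)) * rexp (-(4*(a:ℝ))⁻¹ * x^2)) := by
        apply mul_le_mul_of_nonneg_left _ hc
        exact mul_le_mul_of_nonneg_right h1 (Real.exp_pos _).le

lemma gaussAux_id_int {a : ℝ≥0} (ha : a ≠ 0) :
    Integrable (fun x : ℝ => x) (gaussianReal 0 a) := by
  refine Integrable.mono' ((gaussAux_sq_int ha).add (integrable_const 1))
    measurable_id.aestronglyMeasurable (ae_of_all _ fun x => ?_)
  rw [Real.norm_eq_abs]
  simp only [Pi.add_apply]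
  nlinarith [sq_abs x, abs_nonneg x, sq_nonneg (|x| - 1)]

lemma gaussAux_mean (a : ℝ≥0) : ∫ x, x ∂(gaussianReal 0 a) = 0 := by
  by_cases ha : a = 0
  · simp [ha]
  · have h1 : ((⟨(-1:ℝ)^2, sq_nonneg _⟩ : ℝ≥0)) = 1 := by ext; norm_num
    have hmap := gaussianReal_map_const_mul (μ := 0) (v := a) (-1)
    rw [show gaussianReal (-1 * 0) _ = gaussianReal 0 a by congr 1 <;> [simp; (ext; simp)]] at hmap
    have h2 : ∫ x, x ∂(gaussianReal 0 a) = ∫ x, (-1:ℝ) * x ∂(gaussianReal 0 a) := by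
      conv_lhs => rw [← hmap]
      exact integral_map (by fun_prop) aestronglyMeasurable_id
    simp only [neg_one_mul] at h2
    rw [integral_neg] at h2
    linarith

/-- if `X = X₀ + G_a` with `E[X₀] = 0`, `G_a ∼ N(0,a)` independent of `X₀`,
`0 < a < 1`, and the tail variance of `X` is bounded by a decreasing function `l` tending
to `0`, then the tail variance of `X₀` satisfies
`L_{X₀}(2R) (1 − a²/R²) ≤ l(R)` for all `R > a`. -/
theorem stmt19 {Ω : Type*} [MeasureSpace Ω] [IsProbabilityMeasure (ℙ : Measure Ω)]
    (X0 G : Ω → ℝ) (hX0 : Measurable X0) (hG : Measurable G)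
    (a : ℝ≥0) (ha : 0 < (a : ℝ)) (ha1 : (a : ℝ) < 1)
    (hindep : IndepFun X0 G ℙ)
    (hGlaw : Measure.map G ℙ = gaussianReal 0 a)
    (hmean : ∫ ω, X0 ω = 0)
    (l : ℝ → ℝ) (hmono : Antitone l) (hl0 : Tendsto l atTop (nhds 0))
    (htail : ∀ R : ℝ,
      (∫ ω in {ω | R ≤ |X0 ω + G ω|}, (X0 ω + G ω) ^ 2) ≤ l R) :
    ∀ R : ℝ, (a : ℝ) < R →
      (∫ ω in {ω | 2 * R ≤ |X0 ω|}, (X0 ω) ^ 2) * (1 - (a : ℝ) ^ 2 / R ^ 2) ≤ l R := by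
  have haNN : a ≠ 0 := by
    intro h
    rw [h] at ha
    simp at ha
  -- transfer Gaussian facts through the law of G
  have hGint : Integrable G ℙ := by
    have h := (integrable_map_measure aestronglyMeasurable_id hG.aemeasurable).mp
      (by rw [hGlaw]; exact gaussAux_id_int haNN)
    exact h
  have hG2int : Integrable (fun ω => (G ω) ^ 2) ℙ := by
    have h := (integrable_map_measure (g := fun x : ℝ => x ^ 2)
      (measurable_id.pow_const 2).aestronglyMeasurable hG.aemeasurable).mp
      (by rw [hGlaw]; exact gaussAux_sq_int haNN)
    exact h
  have hEG : ∫ ω, G ω ∂ℙ = 0 := by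
    have h := integral_map (μ := ℙ) (φ := G) (f := fun x : ℝ => x) hG.aemeasurable
      aestronglyMeasurable_id
    rw [hGlaw, gaussAux_mean] at h
    exact h.symm
  intro R hR
  have hR0 : (0:ℝ) < R := ha.trans hR
  have hlR : 0 ≤ l R :=
    le_of_tendsto hl0 (eventually_atTop.2 ⟨R, fun x hx => hmono hx⟩)
  set S : Set ℝ := {x | 2 * R ≤ |x|} with hSdef
  have hS : MeasurableSet S := measurableSet_le measurable_const measurable_abs
  set B : Set Ω := {ω | 2 * R ≤ |X0 ω|} with hBdef
  have hBmeas : MeasurableSet B := measurableSet_le measurable_const hX0.abs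
  rw [← integral_indicator hBmeas]
  by_cases hint : Integrable (B.indicator fun ω => (X0 ω) ^ 2) ℙ
  swap
  · rw [integral_undef hint, zero_mul]
    exact hlR
  -- main case
  set T : Set ℝ := {x | R < |x|} with hTdef
  have hT : MeasurableSet T := measurableSet_lt measurable_const measurable_abs
  set φx : ℝ → ℝ := S.indicator (fun x => x) with hφxdef
  set φ1 : ℝ → ℝ := S.indicator (fun _ => 1) with hφ1def
  set ψ1 : ℝ → ℝ := T.indicator (fun _ => 1) with hψ1def
  have hφxm : Measurable φx := measurable_id.indicator hS
  have hφ1m : Measurable φ1 := measurable_const.indicator hS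
  have hψ1m : Measurable ψ1 := measurable_const.indicator hT
  set L : ℝ := ∫ ω, B.indicator (fun ω' => (X0 ω') ^ 2) ω ∂ℙ with hLdef
  have hL0 : 0 ≤ L :=
    integral_nonneg fun ω => Set.indicator_nonneg (fun _ _ => sq_nonneg _) _
  -- global integrability of X0^2 and (X0+G)^2
  have hX0sq : Integrable (fun ω => (X0 ω) ^ 2) ℙ := by
    refine Integrable.mono' (hint.add (integrable_const ((2*R) ^ 2)))
      ((hX0.pow_const 2).aestronglyMeasurable) (ae_of_all _ fun ω => ?_)
    rw [Real.norm_eq_abs, abs_of_nonneg (sq_nonneg _), Pi.add_apply]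
    by_cases h : ω ∈ B
    · rw [Set.indicator_of_mem h]
      nlinarith [sq_nonneg (2*R)]
    · rw [Set.indicator_of_notMem h]
      have hlt : |X0 ω| < 2 * R := not_le.mp h
      nlinarith [sq_abs (X0 ω), abs_nonneg (X0 ω)]
  have hXsq : Integrable (fun ω => (X0 ω + G ω) ^ 2) ℙ := by
    refine Integrable.mono' ((hX0sq.add hG2int).const_mul 2)
      (((hX0.add hG).pow_const 2).aestronglyMeasurable) (ae_of_all _ fun ω => ?_)
    rw [Real.norm_eq_abs, abs_of_nonneg (sq_nonneg _)]
    simp only [Pi.add_apply]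
    nlinarith [sq_nonneg (X0 ω - G ω)]
  -- integrability of the auxiliary compositions
  have hφxX0 : Integrable (fun ω => φx (X0 ω)) ℙ := by
    refine Integrable.mono' (hint.const_mul (2*R)⁻¹)
      ((hφxm.comp hX0).aestronglyMeasurable) (ae_of_all _ fun ω => ?_)
    rw [Real.norm_eq_abs]
    by_cases h : ω ∈ B
    · have hx : X0 ω ∈ S := h
      rw [hφxdef, Set.indicator_of_mem hx, Set.indicator_of_mem h]
      have h2 : 2 * R ≤ |X0 ω| := h
      rw [inv_mul_eq_div, le_div_iff₀ (by positivity)]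
      nlinarith [sq_abs (X0 ω), abs_nonneg (X0 ω)]
    · have hx : X0 ω ∉ S := h
      rw [hφxdef, Set.indicator_of_notMem hx, Set.indicator_of_notMem h]
      simp
  have hψ1G : Integrable (fun ω => ψ1 (G ω)) ℙ := by
    refine Integrable.mono' (integrable_const 1)
      ((hψ1m.comp hG).aestronglyMeasurable) (ae_of_all _ fun ω => ?_)
    rw [Real.norm_eq_abs, hψ1def]
    by_cases h : G ω ∈ T <;>
      simp [Set.indicator_of_mem, Set.indicator_of_notMem, h]
  have hφ1bdd : ∃ C : ℝ, ∀ ω, ‖φ1 (X0 ω)‖ ≤ C := by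
    refine ⟨1, fun ω => ?_⟩
    rw [Real.norm_eq_abs, hφ1def]
    by_cases h : X0 ω ∈ S <;>
      simp [Set.indicator_of_mem, Set.indicator_of_notMem, h]
  -- independence of compositions
  have hindφx : IndepFun (fun ω => φx (X0 ω)) G ℙ := hindep.comp hφxm measurable_id
  have hindφ1sq : IndepFun (fun ω => φ1 (X0 ω)) (fun ω => (G ω) ^ 2) ℙ :=
    hindep.comp hφ1m (measurable_id.pow_const 2)
  have hindφ1ψ1 : IndepFun (fun ω => φ1 (X0 ω)) (fun ω => ψ1 (G ω)) ℙ :=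
    hindep.comp hφ1m hψ1m
  have hφxGint : Integrable (fun ω => φx (X0 ω) * G ω) ℙ :=
    hindφx.integrable_mul hφxX0 hGint
  have hφ1G2int : Integrable (fun ω => φ1 (X0 ω) * (G ω) ^ 2) ℙ :=
    hG2int.bdd_mul ((hφ1m.comp hX0).aestronglyMeasurable) (ae_of_all _ hφ1bdd.choose_spec)
  have hφ1ψ1int : Integrable (fun ω => φ1 (X0 ω) * ψ1 (G ω)) ℙ :=
    hψ1G.bdd_mul ((hφ1m.comp hX0).aestronglyMeasurable) (ae_of_all _ hφ1bdd.choose_spec)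
  set P : ℝ := ∫ ω, φ1 (X0 ω) ∂ℙ with hPdef
  have hP0 : 0 ≤ P :=
    integral_nonneg fun ω => Set.indicator_nonneg (fun _ _ => zero_le_one) _
  set m2 : ℝ := ∫ ω, (G ω) ^ 2 ∂ℙ with hm2def
  set q : ℝ := ∫ ω, ψ1 (G ω) ∂ℙ with hqdef
  -- cross term vanishes
  have hcross : ∫ ω, φx (X0 ω) * G ω ∂ℙ = 0 := by
    have h := hindφx.integral_mul_eq_mul_integral ((hφxm.comp hX0).aestronglyMeasurable)
      hG.aestronglyMeasurable
    calc ∫ ω, φx (X0 ω) * G ω ∂ℙ = (∫ ω, φx (X0 ω) ∂ℙ) * ∫ ω, G ω ∂ℙ := h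
      _ = 0 := by rw [hEG, mul_zero]
  have hsqterm : ∫ ω, φ1 (X0 ω) * (G ω) ^ 2 ∂ℙ = P * m2 :=
    hindφ1sq.integral_mul_eq_mul_integral ((hφ1m.comp hX0).aestronglyMeasurable)
      ((hG.pow_const 2).aestronglyMeasurable)
  have hPq : ∫ ω, φ1 (X0 ω) * ψ1 (G ω) ∂ℙ = P * q :=
    hindφ1ψ1.integral_mul_eq_mul_integral ((hφ1m.comp hX0).aestronglyMeasurable)
      ((hψ1m.comp hG).aestronglyMeasurable)
  -- Chebyshev for G
  have hcheb : R ^ 2 * q ≤ m2 := by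
    rw [hqdef, ← integral_const_mul _ _]
    refine integral_mono (hψ1G.const_mul _) hG2int fun ω => ?_
    by_cases h : G ω ∈ T
    · have h2 : R < |G ω| := h
      rw [hψ1def, Set.indicator_of_mem h, mul_one]
      nlinarith [sq_abs (G ω)]
    · rw [hψ1def, Set.indicator_of_notMem h, mul_zero]
      exact sq_nonneg _
  -- expansion of the truncated second moment of X = X0 + G over B
  have hexp : ∫ ω, B.indicator (fun ω' => (X0 ω' + G ω') ^ 2) ω ∂ℙ = L + P * m2 := by
    have hpt : ∀ ω, B.indicator (fun ω' => (X0 ω' + G ω') ^ 2) ω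
        = B.indicator (fun ω' => (X0 ω') ^ 2) ω
          + (2 * (φx (X0 ω) * G ω) + φ1 (X0 ω) * (G ω) ^ 2) := by
      intro ω
      by_cases h : ω ∈ B
      · have hx : X0 ω ∈ S := h
        rw [Set.indicator_of_mem h, Set.indicator_of_mem h, hφxdef, hφ1def,
          Set.indicator_of_mem hx, Set.indicator_of_mem hx]
        ring
      · have hx : X0 ω ∉ S := h
        rw [Set.indicator_of_notMem h, Set.indicator_of_notMem h, hφxdef, hφ1def,
          Set.indicator_of_notMem hx, Set.indicator_of_notMem hx]
        ring
    calc ∫ ω, B.indicator (fun ω' => (X0 ω' + G ω') ^ 2) ω ∂ℙ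
        = ∫ ω, (B.indicator (fun ω' => (X0 ω') ^ 2) ω
            + (2 * (φx (X0 ω) * G ω) + φ1 (X0 ω) * (G ω) ^ 2)) ∂ℙ :=
          integral_congr_ae (ae_of_all _ hpt)
      _ = L + (∫ ω, (2 * (φx (X0 ω) * G ω) + φ1 (X0 ω) * (G ω) ^ 2) ∂ℙ) :=
          integral_add hint ((hφxGint.const_mul 2).add hφ1G2int)
      _ = L + ((∫ ω, 2 * (φx (X0 ω) * G ω) ∂ℙ) + ∫ ω, φ1 (X0 ω) * (G ω) ^ 2 ∂ℙ) := by
          rw [integral_add (hφxGint.const_mul 2) hφ1G2int]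
      _ = L + P * m2 := by
          rw [integral_const_mul _ _, hcross, hsqterm, mul_zero, zero_add]
  -- split over D = {R ≤ |X|}
  set D : Set Ω := {ω | R ≤ |X0 ω + G ω|} with hDdef
  have hDmeas : MeasurableSet D := measurableSet_le measurable_const (hX0.add hG).abs
  have hI1 : Integrable ((B ∩ D).indicator fun ω => (X0 ω + G ω) ^ 2) ℙ :=
    hXsq.indicator (hBmeas.inter hDmeas)
  have hI2 : Integrable ((B ∩ Dᶜ).indicator fun ω => (X0 ω + G ω) ^ 2) ℙ :=
    hXsq.indicator (hBmeas.inter hDmeas.compl)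
  have hEqSplit : ∫ ω, B.indicator (fun ω' => (X0 ω' + G ω') ^ 2) ω ∂ℙ
      = (∫ ω, (B ∩ D).indicator (fun ω' => (X0 ω' + G ω') ^ 2) ω ∂ℙ)
        + ∫ ω, (B ∩ Dᶜ).indicator (fun ω' => (X0 ω' + G ω') ^ 2) ω ∂ℙ := by
    rw [← integral_add hI1 hI2]
    refine integral_congr_ae (ae_of_all _ fun ω => ?_)
    simp only [Set.indicator_apply, Set.mem_inter_iff, Set.mem_compl_iff]
    by_cases h : ω ∈ B <;> by_cases h2 : ω ∈ D <;> simp [h, h2]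
  -- the remainder term is at most P * m2
  have hbound2 : ∫ ω, (B ∩ Dᶜ).indicator (fun ω' => (X0 ω' + G ω') ^ 2) ω ∂ℙ ≤ P * m2 := by
    have step1 : ∫ ω, (B ∩ Dᶜ).indicator (fun ω' => (X0 ω' + G ω') ^ 2) ω ∂ℙ
        ≤ ∫ ω, R ^ 2 * (φ1 (X0 ω) * ψ1 (G ω)) ∂ℙ := by
      refine integral_mono hI2 (hφ1ψ1int.const_mul _) fun ω => ?_
      by_cases h : ω ∈ B ∩ Dᶜ
      · rw [Set.indicator_of_mem h]
        obtain ⟨hB', hD'⟩ := h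
        have h1 : 2 * R ≤ |X0 ω| := hB'
        have h2 : |X0 ω + G ω| < R := not_le.mp hD'
        have hx1 : X0 ω ∈ S := hB'
        have hGT : G ω ∈ T := by
          have habs : |X0 ω| - |X0 ω + G ω| ≤ |G ω| := by
            have h3 := abs_sub_abs_le_abs_sub (X0 ω) (X0 ω + G ω)
            have h4 : X0 ω - (X0 ω + G ω) = -G ω := by ring
            rw [h4, abs_neg] at h3
            exact h3
          show R < |G ω|
          linarith
        rw [hφ1def, hψ1def, Set.indicator_of_mem hx1, Set.indicator_of_mem hGT,
          mul_one, mul_one]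
        nlinarith [sq_abs (X0 ω + G ω), abs_nonneg (X0 ω + G ω)]
      · rw [Set.indicator_of_notMem h]
        have hn1 : 0 ≤ φ1 (X0 ω) := Set.indicator_nonneg (fun _ _ => zero_le_one) _
        have hn2 : 0 ≤ ψ1 (G ω) := Set.indicator_nonneg (fun _ _ => zero_le_one) _
        positivity
    have step2 : ∫ ω, R ^ 2 * (φ1 (X0 ω) * ψ1 (G ω)) ∂ℙ = R ^ 2 * (P * q) := by
      rw [integral_const_mul _ _, hPq]
    have step3 : R ^ 2 * (P * q) ≤ P * m2 := by
      have := mul_le_mul_of_nonneg_left hcheb hP0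
      nlinarith
    linarith
  -- the main part is at most the tail of X
  have hmono2 : ∫ ω, (B ∩ D).indicator (fun ω' => (X0 ω' + G ω') ^ 2) ω ∂ℙ
      ≤ ∫ ω in D, (X0 ω + G ω) ^ 2 ∂ℙ := by
    rw [← integral_indicator hDmeas]
    refine integral_mono hI1 (hXsq.indicator hDmeas) fun ω =>
      Set.indicator_le_indicator_of_subset Set.inter_subset_right
        (fun ω' => sq_nonneg _) ω
  have htailD : ∫ ω in D, (X0 ω + G ω) ^ 2 ∂ℙ ≤ l R := htail R
  have hLle : L ≤ l R := by
    have h2 : L + P * m2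
        = (∫ ω, (B ∩ D).indicator (fun ω' => (X0 ω' + G ω') ^ 2) ω ∂ℙ)
          + ∫ ω, (B ∩ Dᶜ).indicator (fun ω' => (X0 ω' + G ω') ^ 2) ω ∂ℙ := by
      rw [← hexp]
      exact hEqSplit
    linarith
  calc L * (1 - (a:ℝ) ^ 2 / R ^ 2) ≤ L * 1 := by
        apply mul_le_mul_of_nonneg_left _ hL0
        have : 0 ≤ (a:ℝ) ^ 2 / R ^ 2 := by positivity
        linarith
    _ = L := mul_one L
    _ ≤ l R := hLle
end
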